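/- arXiv:0811.2340 — 9 statements merged into one kernel-verified Lean document; each statement's English description precedes it below -/
import Mathlib

section
/- Let T : C → A be a functor satisfying: (Ax0) every isomorphism f : T(C) → A' in A lifts to an isomorphism g : C → C' in C with T(g) = f; (Ax2) C and A admit pushouts and T preserves them; (Ax3) every nonempty strict fiber of T has a terminal object. Then the resulting assignment Max : C → C, sending C to the terminal object of the fiber over T(C), together with Max on morphisms defined via pushout along the canonical map ι^C : C → Max(C), is a functor, and the maps ι^C form a natural transformation from the identity functor to Max. -/
open CategoryTheory Limits

universe v₁ v₂ u₁ u₂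

variable {C : Type u₁} [Category.{v₁} C] {A : Type u₂} [Category.{v₂} A]

/-- Axiom (Ax0): every isomorphism `f : T(C) ≅ A'` in `A` lifts to an isomorphism
`g : C ≅ C'` in `C` with `T(g) = f` (and in particular `T(C') = A'`). -/
def Ax0 (T : C ⥤ A) : Prop :=
  ∀ (X : C) (a' : A) (f : T.obj X ≅ a'), ∃ (X' : C) (h : T.obj X' = a') (g : X ≅ X'),
    T.map g.hom = f.hom ≫ eqToHom h.symm

/-- The strict fiber of `T : C ⥤ A` over `a : A`. -/
structure StrictFiber (T : C ⥤ A) (a : A) where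
  obj : C
  eq : T.obj obj = a

instance (T : C ⥤ A) (a : A) : Category (StrictFiber T a) where
  Hom X Y := { g : X.obj ⟶ Y.obj // T.map g = eqToHom (X.eq.trans Y.eq.symm) }
  id X := ⟨𝟙 X.obj, by simp⟩
  comp {X Y Z} f g := ⟨f.1 ≫ g.1, by rw [T.map_comp, f.2, g.2, eqToHom_trans]⟩
  id_comp f := Subtype.ext (Category.id_comp _)
  comp_id f := Subtype.ext (Category.comp_id _)
  assoc f g h := Subtype.ext (Category.assoc _ _ _)

set_option linter.unusedSectionVars false

section MaxAux

variable (T : C ⥤ A) (hAx0 : Ax0 T)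
  [HasPushouts C] [HasPushouts A] [PreservesColimitsOfShape WalkingSpan T]
  (hAx3 : ∀ a : A, Nonempty (StrictFiber T a) → HasTerminal (StrictFiber T a))

/-- The chosen terminal object of the strict fiber over `T.obj X`. -/
noncomputable def maxFib (X : C) : StrictFiber T (T.obj X) :=
  haveI := hAx3 (T.obj X) ⟨⟨X, rfl⟩⟩
  ⊤_ _

noncomputable def maxFibTerminal (X : C) : IsTerminal (maxFib T hAx3 X) :=
  haveI := hAx3 (T.obj X) ⟨⟨X, rfl⟩⟩
  terminalIsTerminal

/-- The object part of `Max`. -/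
noncomputable abbrev MaxObj (X : C) : C := (maxFib T hAx3 X).obj

lemma maxEq (X : C) : T.obj (MaxObj T hAx3 X) = T.obj X := (maxFib T hAx3 X).eq

/-- The canonical map `ι_X : X ⟶ Max X`. -/
noncomputable def iotaHom (X : C) : X ⟶ MaxObj T hAx3 X :=
  ((maxFibTerminal T hAx3 X).from ⟨X, rfl⟩).1

lemma iota_T (X : C) : T.map (iotaHom T hAx3 X) = eqToHom (maxEq T hAx3 X).symm :=
  ((maxFibTerminal T hAx3 X).from ⟨X, rfl⟩).2

variable {X Y : C} (f : X ⟶ Y)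

/-- The image of the defining pushout square under `T` is a pushout. -/
lemma maxPush : IsPushout (T.map (iotaHom T hAx3 X)) (T.map f)
    (T.map (pushout.inl (iotaHom T hAx3 X) f)) (T.map (pushout.inr (iotaHom T hAx3 X) f)) :=
  T.map_isPushout (IsPushout.of_hasPushout _ _)

lemma isIso_T_inr : IsIso (T.map (pushout.inr (iotaHom T hAx3 X) f)) := by
  have hp := maxPush T hAx3 f
  haveI : IsIso (T.map (iotaHom T hAx3 X)) := by rw [iota_T]; infer_instance
  refine ⟨hp.desc (inv (T.map (iotaHom T hAx3 X)) ≫ T.map f) (𝟙 _) (by simp), ?_, ?_⟩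
  · exact hp.inr_desc _ _ _
  · apply hp.hom_ext
    · rw [hp.inl_desc_assoc, Category.assoc, ← hp.w, IsIso.inv_hom_id_assoc, Category.comp_id]
    · rw [hp.inr_desc_assoc, Category.id_comp, Category.comp_id]

/-- The iso `T(P) ≅ T(Y)` obtained from the pushout. -/
noncomputable def maxAlpha : T.obj (pushout (iotaHom T hAx3 X) f) ≅ T.obj Y :=
  haveI := isIso_T_inr T hAx3 f
  (asIso (T.map (pushout.inr (iotaHom T hAx3 X) f))).symm

include hAx0 in
lemma maxSpec : ∃ (P' : C) (h : T.obj P' = T.obj Y)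
    (g : pushout (iotaHom T hAx3 X) f ≅ P'),
    T.map g.hom = (maxAlpha T hAx3 f).hom ≫ eqToHom h.symm :=
  hAx0 _ _ (maxAlpha T hAx3 f)

noncomputable def maxP' : C := (maxSpec T hAx0 hAx3 f).choose

lemma maxP'_eq : T.obj (maxP' T hAx0 hAx3 f) = T.obj Y :=
  (maxSpec T hAx0 hAx3 f).choose_spec.choose

noncomputable def maxG : pushout (iotaHom T hAx3 X) f ≅ maxP' T hAx0 hAx3 f :=
  (maxSpec T hAx0 hAx3 f).choose_spec.choose_spec.choose

lemma maxG_T : T.map (maxG T hAx0 hAx3 f).hom =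
    (maxAlpha T hAx3 f).hom ≫ eqToHom (maxP'_eq T hAx0 hAx3 f).symm :=
  (maxSpec T hAx0 hAx3 f).choose_spec.choose_spec.choose_spec

/-- The fiber morphism from `P'` to the terminal object of the fiber over `T.obj Y`. -/
noncomputable def maxS : (⟨maxP' T hAx0 hAx3 f, maxP'_eq T hAx0 hAx3 f⟩ :
    StrictFiber T (T.obj Y)) ⟶ maxFib T hAx3 Y :=
  (maxFibTerminal T hAx3 Y).from _

/-- The morphism part of `Max`. -/
noncomputable def MaxMap : MaxObj T hAx3 X ⟶ MaxObj T hAx3 Y :=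
  pushout.inl (iotaHom T hAx3 X) f ≫ (maxG T hAx0 hAx3 f).hom ≫ (maxS T hAx0 hAx3 f).1

lemma inr_G_S : pushout.inr (iotaHom T hAx3 X) f ≫ (maxG T hAx0 hAx3 f).hom ≫
    (maxS T hAx0 hAx3 f).1 = iotaHom T hAx3 Y := by
  haveI := isIso_T_inr T hAx3 f
  have key : (⟨pushout.inr (iotaHom T hAx3 X) f ≫ (maxG T hAx0 hAx3 f).hom ≫
      (maxS T hAx0 hAx3 f).1, ?_⟩ : (⟨Y, rfl⟩ : StrictFiber T (T.obj Y)) ⟶ maxFib T hAx3 Y) =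
      (maxFibTerminal T hAx3 Y).from ⟨Y, rfl⟩ := (maxFibTerminal T hAx3 Y).hom_ext _ _
  · exact congrArg Subtype.val key
  · rw [T.map_comp, T.map_comp, maxG_T, (maxS T hAx0 hAx3 f).2]
    simp [maxAlpha]
lemma maxMap_nat : iotaHom T hAx3 X ≫ MaxMap T hAx0 hAx3 f = f ≫ iotaHom T hAx3 Y := by
  rw [MaxMap, pushout.condition_assoc, inr_G_S]

lemma maxMap_unique (u : MaxObj T hAx3 X ⟶ MaxObj T hAx3 Y)
    (hu : iotaHom T hAx3 X ≫ u = f ≫ iotaHom T hAx3 Y) : u = MaxMap T hAx0 hAx3 f := by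
  haveI := isIso_T_inr T hAx3 f
  set w : pushout (iotaHom T hAx3 X) f ⟶ MaxObj T hAx3 Y :=
    pushout.desc u (iotaHom T hAx3 Y) hu with hw
  have hinl : pushout.inl (iotaHom T hAx3 X) f ≫ w = u := pushout.inl_desc _ _ _
  have hinr : pushout.inr (iotaHom T hAx3 X) f ≫ w = iotaHom T hAx3 Y := pushout.inr_desc _ _ _
  -- the composite `g.inv ≫ w` is a fiber morphism, hence equals `maxS`
  have hTw' : T.map ((maxG T hAx0 hAx3 f).inv ≫ w) =
      eqToHom ((maxP'_eq T hAx0 hAx3 f).trans (maxFib T hAx3 Y).eq.symm) := by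
    have hginv : T.map (maxG T hAx0 hAx3 f).inv =
        eqToHom (maxP'_eq T hAx0 hAx3 f) ≫ T.map (pushout.inr (iotaHom T hAx3 X) f) := by
      rw [← cancel_epi (T.map (maxG T hAx0 hAx3 f).hom), ← T.map_comp, Iso.hom_inv_id,
        T.map_id, maxG_T]
      simp [maxAlpha]
    rw [T.map_comp, hginv, Category.assoc, ← T.map_comp, hinr, iota_T, eqToHom_trans]
  have key : (⟨(maxG T hAx0 hAx3 f).inv ≫ w, hTw'⟩ :
      (⟨maxP' T hAx0 hAx3 f, maxP'_eq T hAx0 hAx3 f⟩ : StrictFiber T (T.obj Y)) ⟶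
        maxFib T hAx3 Y) = maxS T hAx0 hAx3 f :=
    (maxFibTerminal T hAx3 Y).hom_ext _ _
  have hw2 : (maxG T hAx0 hAx3 f).inv ≫ w = (maxS T hAx0 hAx3 f).1 := congrArg Subtype.val key
  rw [← hinl, MaxMap, ← hw2, Iso.hom_inv_id_assoc]

/-- The functor `Max : C ⥤ C`. -/
noncomputable def MaxFunctor : C ⥤ C where
  obj := MaxObj T hAx3
  map f := MaxMap T hAx0 hAx3 f
  map_id X := ((maxMap_unique T hAx0 hAx3 (𝟙 X) (𝟙 _) (by simp)).symm)
  map_comp {X Y Z} f g := by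
    refine (maxMap_unique T hAx0 hAx3 (f ≫ g) _ ?_).symm
    rw [← Category.assoc, maxMap_nat, Category.assoc, maxMap_nat, Category.assoc]

end MaxAux

/-- under (Ax0), (Ax2) (pushouts exist in `C` and `A` and are preserved by `T`)
and (Ax3) (nonempty strict fibers have terminal objects), the assignment sending `X` to the
terminal object of the strict fiber over `T.obj X` extends to a functor `Max : C ⥤ C`, and the
canonical maps `ι_X : X ⟶ Max X` (which satisfy `T(ι_X) = id`) form a natural transformation
from the identity functor to `Max`. -/
theorem max_functor_exists (T : C ⥤ A) (hAx0 : Ax0 T)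
    [HasPushouts C] [HasPushouts A] [PreservesColimitsOfShape WalkingSpan T]
    (hAx3 : ∀ a : A, Nonempty (StrictFiber T a) → HasTerminal (StrictFiber T a)) :
    ∃ (M : C ⥤ C) (ι : 𝟭 C ⟶ M),
      ∀ X : C, ∃ h : T.obj (M.obj X) = T.obj X,
        T.map (ι.app X) = eqToHom h.symm ∧
        Nonempty (IsTerminal (⟨M.obj X, h⟩ : StrictFiber T (T.obj X))) := by
  refine ⟨MaxFunctor T hAx0 hAx3,
    ⟨fun X => iotaHom T hAx3 X, fun {X Y} f => (maxMap_nat T hAx0 hAx3 f).symm⟩,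
    fun X => ⟨maxEq T hAx3 X, iota_T T hAx3 X, ⟨maxFibTerminal T hAx3 X⟩⟩⟩
end

section
/- Under axioms (Ax0), (Ax2), (Ax3), for a morphism f : C → C' in C, T(f) is an isomorphism if and only if Max(f) is an isomorphism. -/
open CategoryTheory Limits

universe v₁ v₂ u₁ u₂

variable {C : Type u₁} [Category.{v₁} C] {A : Type u₂} [Category.{v₂} A]

/-- The data of the functor `Max` of the pylonet formalism: a functor `F : C ⥤ C` together
with a natural transformation `ι : 𝟭 C ⟶ F` such that for every `X`, `F.obj X` lies in the
strict fiber of `T` over `T.obj X`, `T(ι_X) = id`, and `F.obj X` is a terminal object of that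
strict fiber (axiom (Ax3)). -/
structure MaxData (T : C ⥤ A) where
  F : C ⥤ C
  ι : 𝟭 C ⟶ F
  fiber_eq : ∀ X : C, T.obj (F.obj X) = T.obj X
  ι_eq : ∀ X : C, T.map (ι.app X) = eqToHom (fiber_eq X).symm
  terminal : ∀ (X Y : C) (h : T.obj Y = T.obj X),
    ∃! g : Y ⟶ F.obj X, T.map g = eqToHom (h.trans (fiber_eq X).symm)

/-- An object is maximal when the canonical map `ι_X : X ⟶ Max X` is an isomorphism. -/
def Pmax {T : C ⥤ A} (M : MaxData T) : C → Prop := fun X => IsIso (M.ι.app X)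

/-- under (Ax0), (Ax2), (Ax3), for a morphism `f : X ⟶ Y` in `C`, `T(f)` is an
isomorphism if and only if `Max(f)` is an isomorphism. -/
theorem isIso_T_map_iff_isIso_max_map (T : C ⥤ A) (hAx0 : Ax0 T)
    [HasPushouts C] [HasPushouts A] [PreservesColimitsOfShape WalkingSpan T]
    (M : MaxData T) {X Y : C} (f : X ⟶ Y) :
    IsIso (T.map f) ↔ IsIso (M.F.map f) := by
  have key : T.map (M.F.map f)
      = eqToHom (M.fiber_eq X) ≫ T.map f ≫ eqToHom (M.fiber_eq Y).symm := by
    have h2 := congrArg T.map (M.ι.naturality f)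
    simp only [Functor.map_comp, Functor.id_map, M.ι_eq] at h2
    calc T.map (M.F.map f)
        = eqToHom (M.fiber_eq X) ≫ (eqToHom (M.fiber_eq X).symm ≫ T.map (M.F.map f)) := by
          simp
      _ = eqToHom (M.fiber_eq X) ≫ T.map f ≫ eqToHom (M.fiber_eq Y).symm := by rw [← h2]
  constructor
  · intro hf
    have hTg : IsIso (T.map (M.F.map f)) := by rw [key]; infer_instance
    obtain ⟨X', hX', e, he⟩ :=
      hAx0 (M.F.obj Y) (T.obj (M.F.obj X)) (asIso (T.map (M.F.map f))).symm
    have hX'X : T.obj X' = T.obj X := hX'.trans (M.fiber_eq X)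
    obtain ⟨u, hu, -⟩ := M.terminal X X' hX'X
    set g := M.F.map f with hg
    set h₀ : M.F.obj Y ⟶ M.F.obj X := e.hom ≫ u with hh₀
    have hTh : T.map h₀ = inv (T.map g) := by
      simp [hh₀, he, hu, eqToHom_trans]; rfl
    obtain ⟨m, hm, hmu⟩ := M.terminal X (M.F.obj X) (M.fiber_eq X)
    have h1 : g ≫ h₀ = 𝟙 _ := by
      have e1 : g ≫ h₀ = m := hmu _ (by simp [hTh])
      have e2 : 𝟙 (M.F.obj X) = m := hmu _ (by simp)
      rw [e1, ← e2]
    obtain ⟨m', hm', hmu'⟩ := M.terminal Y (M.F.obj Y) (M.fiber_eq Y)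
    have h2 : h₀ ≫ g = 𝟙 _ := by
      have e1 : h₀ ≫ g = m' := hmu' _ (by simp [hTh])
      have e2 : 𝟙 (M.F.obj Y) = m' := hmu' _ (by simp)
      rw [e1, ← e2]
    exact ⟨⟨h₀, h1, h2⟩⟩
  · intro hf
    have : T.map f
        = eqToHom (M.fiber_eq X).symm ≫ T.map (M.F.map f) ≫ eqToHom (M.fiber_eq Y) := by
      rw [key]; simp
    rw [this]
    infer_instance
end

section
/- Under axioms (Ax0), (Ax2), (Ax3), the corestricted functor Max : C → Max(C) is left adjoint to the inclusion functor Max(C) ↪ C. -/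
open CategoryTheory Limits

universe v₁ v₂ u₁ u₂

variable {C : Type u₁} [Category.{v₁} C] {A : Type u₂} [Category.{v₂} A]

/-- under (Ax0), (Ax2), (Ax3), the corestriction of `Max` to the full
subcategory `Max(C)` of maximal objects is a left adjoint of the inclusion
`Max(C) ↪ C`. -/
theorem max_left_adjoint_of_inclusion (T : C ⥤ A) (hAx0 : Ax0 T)
    [HasPushouts C] [HasPushouts A] [PreservesColimitsOfShape WalkingSpan T]
    (M : MaxData T) :
    ∃ G : C ⥤ ObjectProperty.FullSubcategory (Pmax M),
      Nonempty (G ⋙ ObjectProperty.ι (Pmax M) ≅ M.F) ∧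
      Nonempty (G ⊣ ObjectProperty.ι (Pmax M)) := by
  -- `F.map (ι X) = ι (F X)`
  have key : ∀ X : C, M.F.map (M.ι.app X) = M.ι.app (M.F.obj X) := by
    intro X
    have hnat : M.ι.app X ≫ M.ι.app (M.F.obj X) = M.ι.app X ≫ M.F.map (M.ι.app X) := by
      simpa using M.ι.naturality (M.ι.app X)
    have hT : T.map (M.F.map (M.ι.app X)) = eqToHom (M.fiber_eq (M.F.obj X)).symm := by
      have h := congrArg T.map hnat
      simp only [T.map_comp, M.ι_eq] at h
      have h2 := (cancel_epi (eqToHom (M.fiber_eq X).symm)).1 h.symm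
      rw [h2]
    obtain ⟨g, hg, hu⟩ := M.terminal (M.F.obj X) (M.F.obj X) rfl
    have h1 : M.F.map (M.ι.app X) = g := hu _ hT
    have h2 : M.ι.app (M.F.obj X) = g := hu _ (M.ι_eq _)
    rw [h1, h2]
  have hmax : ∀ X : C, Pmax M (M.F.obj X) := by
    intro X
    obtain ⟨g, hg, hu⟩ :=
      M.terminal X (M.F.obj (M.F.obj X)) ((M.fiber_eq _).trans (M.fiber_eq X))
    refine ⟨⟨g, ?_, ?_⟩⟩
    · obtain ⟨g', hg', hu'⟩ := M.terminal X (M.F.obj X) (M.fiber_eq X)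
      have e1 : M.ι.app (M.F.obj X) ≫ g = g' := by
        refine hu' _ ?_
        show T.map (M.ι.app (M.F.obj X) ≫ g) = _
        rw [T.map_comp, M.ι_eq, hg]
        simp
      have e2 : 𝟙 (M.F.obj X) = g' := by
        refine hu' _ ?_
        show T.map (𝟙 (M.F.obj X)) = _
        simp
      rw [e1]; exact e2.symm
    · obtain ⟨g', hg', hu'⟩ :=
        M.terminal (M.F.obj X) (M.F.obj (M.F.obj X)) (M.fiber_eq (M.F.obj X))
      have e1 : g ≫ M.ι.app (M.F.obj X) = g' := by
        refine hu' _ ?_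
        show T.map (g ≫ M.ι.app (M.F.obj X)) = _
        rw [T.map_comp, M.ι_eq, hg]
        simp
      have e2 : 𝟙 (M.F.obj (M.F.obj X)) = g' := by
        refine hu' _ ?_
        show T.map (𝟙 (M.F.obj (M.F.obj X))) = _
        simp
      rw [e1]; exact e2.symm
  refine ⟨ObjectProperty.lift (Pmax M) M.F hmax,
    ⟨ObjectProperty.liftCompιIso (Pmax M) M.F hmax⟩, ⟨?_⟩⟩
  refine Adjunction.mkOfUnitCounit
    { unit := { app := fun X => M.ι.app X, naturality := fun X Y f => M.ι.naturality f }
      counit :=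
        { app := fun Y =>
            haveI : IsIso (M.ι.app Y.obj) := Y.2
            ObjectProperty.homMk (inv (M.ι.app Y.obj) : M.F.obj Y.obj ⟶ Y.obj)
          naturality := fun Y Y' f => by
            haveI : IsIso (M.ι.app Y.obj) := Y.2
            haveI : IsIso (M.ι.app Y'.obj) := Y'.2
            apply ObjectProperty.hom_ext
            show M.F.map f.hom ≫ inv (M.ι.app Y'.obj) = inv (M.ι.app Y.obj) ≫ f.hom
            rw [IsIso.comp_inv_eq, Category.assoc, IsIso.eq_inv_comp]
            exact (M.ι.naturality f.hom).symm }
      left_triangle := by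
        ext X
        haveI : IsIso (M.ι.app (M.F.obj X)) := hmax X
        show M.F.map (M.ι.app X) ≫ 𝟙 _ ≫ inv (M.ι.app (M.F.obj X)) = 𝟙 _
        rw [Category.id_comp, key X, IsIso.hom_inv_id]
      right_triangle := by
        ext Y
        haveI : IsIso (M.ι.app Y.obj) := Y.2
        show M.ι.app Y.obj ≫ 𝟙 _ ≫ inv (M.ι.app Y.obj) = 𝟙 _
        rw [Category.id_comp, IsIso.hom_inv_id] }
end

section
/- Under axioms (Ax0), (Ax2), (Ax3), the functor Max : C → Max(C) exhibits Max(C) as the localization of C at the class of morphisms f such that T(f) is an isomorphism: for any functor F : C → X sending every such f to an isomorphism, there is a functor G : Max(C) → X and a natural isomorphism F ≅ G ∘ Max. -/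
open CategoryTheory Limits

universe v₁ v₂ u₁ u₂

variable {C : Type u₁} [Category.{v₁} C] {A : Type u₂} [Category.{v₂} A]

/-- under (Ax0), (Ax2), (Ax3), the functor `Max : C ⥤ Max(C)` exhibits
`Max(C)` as the localization of `C` at the morphisms `f` such that `T(f)` is an
isomorphism: any functor `F : C ⥤ X` inverting these morphisms factors, up to natural
isomorphism, through `Max`. -/
theorem max_is_localization (T : C ⥤ A) (hAx0 : Ax0 T)
    [HasPushouts C] [HasPushouts A] [PreservesColimitsOfShape WalkingSpan T]
    (M : MaxData T)
    (Mx : C ⥤ ObjectProperty.FullSubcategory (Pmax M))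
    (hMx : Mx ⋙ ObjectProperty.ι (Pmax M) ≅ M.F)
    {X : Type*} [Category X] (F : C ⥤ X)
    (hF : ∀ {c c' : C} (f : c ⟶ c'), IsIso (T.map f) → IsIso (F.map f)) :
    ∃ G : ObjectProperty.FullSubcategory (Pmax M) ⥤ X, Nonempty (F ≅ Mx ⋙ G) := by
  refine ⟨ObjectProperty.ι (Pmax M) ⋙ F, ⟨?_⟩⟩
  have hiso : ∀ c : C, IsIso ((Functor.whiskerRight M.ι F).app c) := by
    intro c
    simp only [Functor.whiskerRight_app]
    exact hF (M.ι.app c) (by rw [M.ι_eq]; infer_instance)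
  have : IsIso (Functor.whiskerRight M.ι F) := NatIso.isIso_of_isIso_app _
  exact (Functor.leftUnitor F).symm ≪≫ asIso (Functor.whiskerRight M.ι F) ≪≫
    Functor.isoWhiskerRight hMx.symm F ≪≫ Functor.associator _ _ _
end

section
/- Under axioms (Ax0), (Ax2), (Ax3), the restriction T_max of T to the subcategory Max(C) of maximal objects is conservative: a morphism f in Max(C) is an isomorphism if and only if T_max(f) is an isomorphism. Moreover, if T is faithful (resp. full, resp. essentially surjective), then so is T_max. -/
open CategoryTheory Limits

universe v₁ v₂ u₁ u₂

variable {C : Type u₁} [Category.{v₁} C] {A : Type u₂} [Category.{v₂} A]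

lemma pmax_of_iso {T : C ⥤ A} (M : MaxData T) {X Y : C} (e : X ≅ Y) (hX : Pmax M X) :
    Pmax M Y := by
  have hnat : e.hom ≫ M.ι.app Y = M.ι.app X ≫ M.F.map e.hom := M.ι.naturality e.hom
  have : M.ι.app Y = e.inv ≫ M.ι.app X ≫ M.F.map e.hom := by
    rw [← hnat, Iso.inv_hom_id_assoc]
  rw [Pmax, this]
  have : IsIso (M.ι.app X) := hX
  infer_instance

lemma iso_of_eqToHom {T : C ⥤ A} (M : MaxData T) {X Y : C} (hX : Pmax M X) (hY : Pmax M Y)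
    (h : T.obj X = T.obj Y) (φ : X ⟶ Y) (hφ : T.map φ = eqToHom h) : IsIso φ := by
  haveI : IsIso (M.ι.app X) := hX
  haveI : IsIso (M.ι.app Y) := hY
  obtain ⟨v, hv, -⟩ := M.terminal X Y h.symm
  refine ⟨v ≫ inv (M.ι.app X), ?_, ?_⟩
  · obtain ⟨u, hu, huu⟩ := M.terminal X X rfl
    have h1 : (φ ≫ v ≫ inv (M.ι.app X)) ≫ M.ι.app X = u := by
      apply huu
      simp [T.map_comp, hφ, hv, M.ι_eq]
    have h2 : 𝟙 X ≫ M.ι.app X = u := by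
      apply huu
      simp [M.ι_eq]
    have := h1.trans h2.symm
    exact (cancel_mono (M.ι.app X)).mp this
  · obtain ⟨u, hu, huu⟩ := M.terminal Y Y rfl
    have h1 : ((v ≫ inv (M.ι.app X)) ≫ φ) ≫ M.ι.app Y = u := by
      apply huu
      simp [T.map_comp, hφ, hv, M.ι_eq]
    have h2 : 𝟙 Y ≫ M.ι.app Y = u := by
      apply huu
      simp [M.ι_eq]
    have := h1.trans h2.symm
    exact (cancel_mono (M.ι.app Y)).mp this

lemma pmax_F {T : C ⥤ A} (M : MaxData T) (X : C) : Pmax M (M.F.obj X) := by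
  obtain ⟨w, hw, -⟩ :=
    M.terminal X (M.F.obj (M.F.obj X)) ((M.fiber_eq _).trans (M.fiber_eq X))
  refine ⟨w, ?_, ?_⟩
  · obtain ⟨u, hu, huu⟩ := M.terminal X (M.F.obj X) (M.fiber_eq X)
    have h1 : M.ι.app (M.F.obj X) ≫ w = u := by
      apply huu
      simp [T.map_comp, hw, M.ι_eq]
    have h2 : 𝟙 (M.F.obj X) = u := by
      apply huu
      simp
    rw [h1]; exact h2.symm
  · obtain ⟨u, hu, huu⟩ :=
      M.terminal (M.F.obj X) (M.F.obj (M.F.obj X)) (M.fiber_eq (M.F.obj X))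
    have h1 : w ≫ M.ι.app (M.F.obj X) = u := by
      apply huu
      simp [T.map_comp, hw, M.ι_eq]
    have h2 : 𝟙 (M.F.obj (M.F.obj X)) = u := by
      apply huu
      simp
    rw [h1]; exact h2.symm


/-- under (Ax0), (Ax2), (Ax3), the restriction `T_max` of `T` to the full
subcategory of maximal objects is conservative; moreover if `T` is faithful
(resp. full, resp. essentially surjective) then so is `T_max`. -/
theorem tmax_conservative_and_inherits (T : C ⥤ A) (hAx0 : Ax0 T)
    [HasPushouts C] [HasPushouts A] [PreservesColimitsOfShape WalkingSpan T]
    (M : MaxData T) :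
    (∀ {X Y : ObjectProperty.FullSubcategory (Pmax M)} (f : X ⟶ Y),
      IsIso ((ObjectProperty.ι (Pmax M) ⋙ T).map f) ↔ IsIso f) ∧
    (T.Faithful → (ObjectProperty.ι (Pmax M) ⋙ T).Faithful) ∧
    (T.Full → (ObjectProperty.ι (Pmax M) ⋙ T).Full) ∧
    (T.EssSurj → (ObjectProperty.ι (Pmax M) ⋙ T).EssSurj) := by
  refine ⟨?_, ?_, ?_, ?_⟩
  · intro X Y f
    constructor
    · intro hiso
      have hiso' : IsIso (T.map f.hom) := hiso
      obtain ⟨X', h, g, hg⟩ := hAx0 X.obj (T.obj Y.obj) (asIso (T.map f.hom))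
      have hX' : Pmax M X' := pmax_of_iso M g X.property
      have hginv : T.map g.inv = eqToHom h ≫ inv (T.map f.hom) := by
        have : T.map g.hom ≫ (eqToHom h ≫ inv (T.map f.hom)) = 𝟙 _ := by
          rw [hg]; simp
        have h2 : T.map g.inv = T.map g.inv ≫ T.map g.hom ≫ (eqToHom h ≫ inv (T.map f.hom)) := by
          rw [this, Category.comp_id]
        rw [h2, ← T.map_comp_assoc, g.inv_hom_id, T.map_id, Category.id_comp]
      have hφ : T.map (g.inv ≫ f.hom) = eqToHom h := by
        rw [T.map_comp, hginv]
        simp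
      haveI : IsIso (g.inv ≫ f.hom) := iso_of_eqToHom M hX' Y.property h (g.inv ≫ f.hom) hφ
      have hC : IsIso (g.hom ≫ g.inv ≫ f.hom) := inferInstance
      have heq : (ObjectProperty.ι (Pmax M)).map f = g.hom ≫ g.inv ≫ f.hom := by
        simp
      haveI : IsIso ((ObjectProperty.ι (Pmax M)).map f) := by
        rw [heq]; exact hC
      exact isIso_of_reflects_iso f (ObjectProperty.ι (Pmax M))
    · intro h
      infer_instance
  · intro h
    exact Functor.Faithful.comp _ _
  · intro h
    exact Functor.Full.comp _ _
  · intro h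
    constructor
    intro a
    refine ⟨⟨M.F.obj (T.objPreimage a), pmax_F M _⟩,
      ⟨eqToIso (M.fiber_eq _) ≪≫ T.objObjPreimageIso a⟩⟩
end

section
/- Suppose T : C → A satisfies (Ax0), (Ax2), (Ax3) and also the dual axioms (Ax2*) (pullbacks exist in C and A and T preserves them) and (Ax3*) (every fiber has an initial object), so that a functor Min : C → C is defined dually to Max. Then Min ∘ Max = Min and Max ∘ Min = Max, and consequently the restrictions Min : Max(C) → Min(C) and Max : Min(C) → Max(C) are mutually inverse equivalences of categories. -/
open CategoryTheory Limits

universe v₁ v₂ u₁ u₂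

variable {C : Type u₁} [Category.{v₁} C] {A : Type u₂} [Category.{v₂} A]

/-- The data of the dual functor `Min`: for every `X`, `F.obj X` is an initial object of the
strict fiber of `T` over `T.obj X` (axiom (Ax3*)). -/
structure MinData (T : C ⥤ A) where
  F : C ⥤ C
  ι : F ⟶ 𝟭 C
  fiber_eq : ∀ X : C, T.obj (F.obj X) = T.obj X
  ι_eq : ∀ X : C, T.map (ι.app X) = eqToHom (fiber_eq X)
  initial : ∀ (X Y : C) (h : T.obj Y = T.obj X),
    ∃! g : F.obj X ⟶ Y, T.map g = eqToHom ((fiber_eq X).trans h.symm)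

/-- An object is minimal when the canonical map `ι_X : Min X ⟶ X` is an isomorphism. -/
def Pmin {T : C ⥤ A} (N : MinData T) : C → Prop := fun X => IsIso (N.ι.app X)


section Aux

variable {T : C ⥤ A}

/-- Uniqueness of maps out of a `Min` object with prescribed `T`-image. -/
lemma min_hom_ext (N : MinData T) {X Y : C} (h : T.obj Y = T.obj X)
    {g₁ g₂ : N.F.obj X ⟶ Y}
    (h₁ : T.map g₁ = eqToHom ((N.fiber_eq X).trans h.symm))
    (h₂ : T.map g₂ = eqToHom ((N.fiber_eq X).trans h.symm)) : g₁ = g₂ := by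
  obtain ⟨g, -, hu⟩ := N.initial X Y h
  rw [hu g₁ h₁, hu g₂ h₂]

/-- Uniqueness of maps into a `Max` object with prescribed `T`-image. -/
lemma max_hom_ext (M : MaxData T) {X Y : C} (h : T.obj Y = T.obj X)
    {g₁ g₂ : Y ⟶ M.F.obj X}
    (h₁ : T.map g₁ = eqToHom (h.trans (M.fiber_eq X).symm))
    (h₂ : T.map g₂ = eqToHom (h.trans (M.fiber_eq X).symm)) : g₁ = g₂ := by
  obtain ⟨g, -, hu⟩ := M.terminal X Y h
  rw [hu g₁ h₁, hu g₂ h₂]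

/-- A map between two `Min` objects whose `T`-image is an `eqToHom` is an isomorphism. -/
lemma min_min_iso (N : MinData T) {X W : C}
    (e : T.obj (N.F.obj X) = T.obj (N.F.obj W))
    {g : N.F.obj X ⟶ N.F.obj W} (hg : T.map g = eqToHom e) : IsIso g := by
  have h' : T.obj (N.F.obj X) = T.obj W := e.trans (N.fiber_eq W)
  obtain ⟨u, hu, -⟩ := N.initial W (N.F.obj X) h'
  refine ⟨u, ?_, ?_⟩
  · refine min_hom_ext N (N.fiber_eq X) ?_ ?_
    · rw [T.map_comp, hg, hu, eqToHom_trans]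
    · rw [T.map_id, eqToHom_refl]
  · refine min_hom_ext N (N.fiber_eq W) ?_ ?_
    · rw [T.map_comp, hg, hu]
      simp [eqToHom_trans]
    · rw [T.map_id, eqToHom_refl]

/-- A map between two `Max` objects whose `T`-image is an `eqToHom` is an isomorphism. -/
lemma max_max_iso (M : MaxData T) {X W : C}
    (e : T.obj (M.F.obj W) = T.obj (M.F.obj X))
    {g : M.F.obj W ⟶ M.F.obj X} (hg : T.map g = eqToHom e) : IsIso g := by
  have h' : T.obj (M.F.obj X) = T.obj W := e.symm.trans (M.fiber_eq W)
  obtain ⟨u, hu, -⟩ := M.terminal W (M.F.obj X) h'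
  refine ⟨u, ?_, ?_⟩
  · refine max_hom_ext M (M.fiber_eq W) ?_ ?_
    · rw [T.map_comp, hg, hu, eqToHom_trans]
    · rw [T.map_id, eqToHom_refl]
  · refine max_hom_ext M (M.fiber_eq X) ?_ ?_
    · rw [T.map_comp, hg, hu]
      simp [eqToHom_trans]
    · rw [T.map_id, eqToHom_refl]

/-- `T`-image of `Min` applied to a morphism. -/
lemma min_map_T (N : MinData T) {X Y : C} (f : X ⟶ Y) :
    T.map (N.F.map f)
      = eqToHom (N.fiber_eq X) ≫ T.map f ≫ eqToHom (N.fiber_eq Y).symm := by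
  have h := N.ι.naturality f
  have h2 := congrArg T.map h
  simp only [Functor.id_map, T.map_comp, N.ι_eq] at h2
  calc T.map (N.F.map f)
      = (T.map (N.F.map f) ≫ eqToHom (N.fiber_eq Y)) ≫ eqToHom (N.fiber_eq Y).symm := by
        simp
    _ = _ := by rw [h2]; simp

/-- `T`-image of `Max` applied to a morphism. -/
lemma max_map_T (M : MaxData T) {X Y : C} (f : X ⟶ Y) :
    T.map (M.F.map f)
      = eqToHom (M.fiber_eq X) ≫ T.map f ≫ eqToHom (M.fiber_eq Y).symm := by
  have h := M.ι.naturality f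
  have h2 := congrArg T.map h
  simp only [Functor.id_map, T.map_comp, M.ι_eq] at h2
  calc T.map (M.F.map f)
      = eqToHom (M.fiber_eq X) ≫ (eqToHom (M.fiber_eq X).symm ≫ T.map (M.F.map f)) := by
        simp
    _ = _ := by rw [← h2]

/-- `Min (Max X) ≅ Min X`, via the canonical comparison map. -/
lemma minMax_iso (M : MaxData T) (N : MinData T) (X : C) :
    IsIso (N.F.map (M.ι.app X)) := by
  refine min_min_iso N ((N.fiber_eq X).trans
    ((M.fiber_eq X).symm.trans (N.fiber_eq (M.F.obj X)).symm))
    (g := N.F.map (M.ι.app X)) ?_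
  rw [min_map_T, M.ι_eq]
  simp [eqToHom_trans]

/-- `Max (Min X) ≅ Max X`, via the canonical comparison map. -/
lemma maxMin_iso (M : MaxData T) (N : MinData T) (X : C) :
    IsIso (M.F.map (N.ι.app X)) := by
  refine max_max_iso M ((M.fiber_eq (N.F.obj X)).trans
    ((N.fiber_eq X).trans (M.fiber_eq X).symm)) (g := M.F.map (N.ι.app X)) ?_
  rw [max_map_T, N.ι_eq]
  simp [eqToHom_trans]

/-- Every `Min` object is minimal. -/
lemma pmin_min (N : MinData T) (X : C) : Pmin N (N.F.obj X) := by
  exact min_min_iso N (N.fiber_eq (N.F.obj X)) (g := N.ι.app (N.F.obj X)) (N.ι_eq _)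

/-- Every `Max` object is maximal. -/
lemma pmax_max (M : MaxData T) (X : C) : Pmax M (M.F.obj X) := by
  exact max_max_iso M (M.fiber_eq (M.F.obj X)).symm (g := M.ι.app (M.F.obj X)) (M.ι_eq _)

end Aux

/-- under (Ax0), (Ax2), (Ax3) and the dual axioms (Ax2*), (Ax3*),
one has `Min ∘ Max = Min` and `Max ∘ Min = Max`, and the restrictions
`Min : Max(C) → Min(C)` and `Max : Min(C) → Max(C)` are mutually inverse equivalences
of categories. -/
theorem min_max_equivalence (T : C ⥤ A) (hAx0 : Ax0 T)
    [HasPushouts C] [HasPushouts A] [PreservesColimitsOfShape WalkingSpan T]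
    [HasPullbacks C] [HasPullbacks A] [PreservesLimitsOfShape WalkingCospan T]
    (M : MaxData T) (N : MinData T) :
    Nonempty ((M.F ⋙ N.F) ≅ N.F) ∧ Nonempty ((N.F ⋙ M.F) ≅ M.F) ∧
    ∃ (G : ObjectProperty.FullSubcategory (Pmax M) ⥤ ObjectProperty.FullSubcategory (Pmin N))
      (H : ObjectProperty.FullSubcategory (Pmin N) ⥤ ObjectProperty.FullSubcategory (Pmax M)),
      Nonempty (G ⋙ ObjectProperty.ι (Pmin N) ≅
        ObjectProperty.ι (Pmax M) ⋙ N.F) ∧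
      Nonempty (H ⋙ ObjectProperty.ι (Pmax M) ≅
        ObjectProperty.ι (Pmin N) ⋙ M.F) ∧
      Nonempty (G ⋙ H ≅ 𝟭 (ObjectProperty.FullSubcategory (Pmax M))) ∧
      Nonempty (H ⋙ G ≅ 𝟭 (ObjectProperty.FullSubcategory (Pmin N))) := by
  haveI h1 : ∀ X : C, IsIso (N.F.map (M.ι.app X)) := minMax_iso M N
  haveI h2 : ∀ X : C, IsIso (M.F.map (N.ι.app X)) := maxMin_iso M N
  refine ⟨⟨?_⟩, ⟨?_⟩, ?_⟩
  · have e1 : N.F ≅ M.F ⋙ N.F := NatIso.ofComponents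
      (fun X => @asIso _ _ _ _ (N.F.map (M.ι.app X)) (h1 X))
      (fun {X Y} f => by
        dsimp
        rw [← N.F.map_comp, ← N.F.map_comp, ← M.ι.naturality f]
        rfl)
    exact e1.symm
  · have e2 : N.F ⋙ M.F ≅ M.F := NatIso.ofComponents
      (fun X => @asIso _ _ _ _ (M.F.map (N.ι.app X)) (h2 X))
      (fun {X Y} f => by
        dsimp
        rw [← M.F.map_comp, ← M.F.map_comp, N.ι.naturality f]
        rfl)
    exact e2
  · refine ⟨ObjectProperty.lift (Pmin N) (ObjectProperty.ι (Pmax M) ⋙ N.F)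
        (fun X => pmin_min N X.obj),
      ObjectProperty.lift (Pmax M) (ObjectProperty.ι (Pmin N) ⋙ M.F)
        (fun X => pmax_max M X.obj),
      ⟨ObjectProperty.liftCompιIso _ _ _⟩,
      ⟨ObjectProperty.liftCompιIso _ _ _⟩, ⟨?_⟩, ⟨?_⟩⟩
    · refine NatIso.ofComponents (fun X => ?_) (fun {X Y} f => ?_)
      · haveI : IsIso (M.ι.app X.obj) := X.property
        exact (ObjectProperty.ι (Pmax M)).preimageIso
          (asIso (M.F.map (N.ι.app X.obj)) ≪≫ (asIso (M.ι.app X.obj)).symm)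
      · apply (ObjectProperty.ι (Pmax M)).map_injective
        haveI : IsIso (M.ι.app X.obj) := X.property
        haveI : IsIso (M.ι.app Y.obj) := Y.property
        simp only [Functor.map_comp, Functor.preimageIso_hom, Functor.map_preimage,
          Iso.trans_hom, Iso.symm_hom, asIso_hom, asIso_inv]
        show M.F.map (N.F.map f.hom) ≫ M.F.map (N.ι.app Y.obj) ≫ inv (M.ι.app Y.obj)
          = (M.F.map (N.ι.app X.obj) ≫ inv (M.ι.app X.obj)) ≫ f.hom
        have key : M.F.map f.hom ≫ inv (M.ι.app Y.obj) = inv (M.ι.app X.obj) ≫ f.hom := by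
          rw [IsIso.comp_inv_eq, Category.assoc, IsIso.eq_inv_comp]
          exact (M.ι.naturality f.hom).symm
        have h3 : N.F.map f.hom ≫ N.ι.app Y.obj = N.ι.app X.obj ≫ f.hom := by
          simpa using N.ι.naturality f.hom
        conv_lhs => rw [← Category.assoc, ← M.F.map_comp, h3, M.F.map_comp,
          Category.assoc, key]
        simp only [Category.assoc]
    · refine NatIso.ofComponents (fun X => ?_) (fun {X Y} f => ?_)
      · haveI : IsIso (N.ι.app X.obj) := X.property
        exact (ObjectProperty.ι (Pmin N)).preimageIso
          ((asIso (N.F.map (M.ι.app X.obj))).symm ≪≫ asIso (N.ι.app X.obj))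
      · apply (ObjectProperty.ι (Pmin N)).map_injective
        haveI : IsIso (N.ι.app X.obj) := X.property
        haveI : IsIso (N.ι.app Y.obj) := Y.property
        simp only [Functor.map_comp, Functor.preimageIso_hom, Functor.map_preimage,
          Iso.trans_hom, Iso.symm_hom, asIso_hom, asIso_inv]
        show N.F.map (M.F.map f.hom) ≫ inv (N.F.map (M.ι.app Y.obj)) ≫ N.ι.app Y.obj
          = (inv (N.F.map (M.ι.app X.obj)) ≫ N.ι.app X.obj) ≫ f.hom
        have key2 : N.F.map (M.F.map f.hom) ≫ inv (N.F.map (M.ι.app Y.obj))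
            = inv (N.F.map (M.ι.app X.obj)) ≫ N.F.map f.hom := by
          rw [IsIso.comp_inv_eq, Category.assoc, IsIso.eq_inv_comp, ← N.F.map_comp,
            ← N.F.map_comp, ← M.ι.naturality f.hom]
          rfl
        have h3 : N.F.map f.hom ≫ N.ι.app Y.obj = N.ι.app X.obj ≫ f.hom := by
          simpa using N.ι.naturality f.hom
        conv_lhs => rw [← Category.assoc, key2, Category.assoc, h3]
        simp only [Category.assoc]
end

section
/- Suppose T : C → A satisfies (Ax0), (Ax2), (Ax3), (Ax2*), (Ax3*) and (Ax4): there are dualities (involutive contravariant endofunctors) on C and A compatible with T. Then for every C ∈ C one has natural isomorphisms Max(C*) ≅ Min(C)* and Min(C*) ≅ Max(C)*; in particular the duality of C interchanges the subcategories Min(C) and Max(C), and C ↦ Max(C*) defines a duality on Max(C) compatible with T restricted to Max(C). -/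
open CategoryTheory Limits

universe v₁ v₂ u₁ u₂

variable {C : Type u₁} [Category.{v₁} C] {A : Type u₂} [Category.{v₂} A]

/-- A duality on a category `X`: a contravariant endofunctor `D` together with a functorial
identification `(X*)* ≅ X`. -/
structure DualityData (X : Type*) [Category X] where
  D : Xᵒᵖ ⥤ X
  invol : D.rightOp ⋙ D ≅ 𝟭 X

section PylAuxSection

open Opposite

namespace PylAux

/-- `Z` is terminal among objects mapping isomorphically to `T.obj Z`. -/
def IsLaxTerm (T : C ⥤ A) (Z : C) : Prop :=
  ∀ (Y : C) (m : T.obj Y ⟶ T.obj Z), IsIso m → ∃! g : Y ⟶ Z, T.map g = m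

/-- `Z` is initial among objects receiving an isomorphism from `T.obj Z`. -/
def IsLaxInit (T : C ⥤ A) (Z : C) : Prop :=
  ∀ (Y : C) (m : T.obj Z ⟶ T.obj Y), IsIso m → ∃! g : Z ⟶ Y, T.map g = m

theorem max_laxTerm (T : C ⥤ A) (hAx0 : Ax0 T) (M : MaxData T) (x : C) :
    IsLaxTerm T (M.F.obj x) := by
  intro Y m hm
  haveI := hm
  obtain ⟨Y', h, g, hg⟩ := hAx0 Y (T.obj x) (asIso m ≪≫ eqToIso (M.fiber_eq x))
  obtain ⟨g', hg', hgu⟩ := M.terminal x Y' h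
  simp only [Iso.trans_hom, asIso_hom, eqToIso.hom, Category.assoc] at hg
  refine ⟨g.hom ≫ g', ?_, ?_⟩
  · simp [hg, hg', eqToHom_trans]
  · intro t ht
    have e1 : T.map g.hom ≫ T.map (g.inv ≫ t) =
        T.map g.hom ≫ eqToHom (h.trans (M.fiber_eq x).symm) := by
      rw [← T.map_comp, g.hom_inv_id_assoc, ht, hg]
      simp [eqToHom_trans]
    have e2 := hgu (g.inv ≫ t) ((cancel_epi (T.map g.hom)).1 e1)
    rw [← e2, g.hom_inv_id_assoc]

theorem min_laxInit (T : C ⥤ A) (hAx0 : Ax0 T) (N : MinData T) (x : C) :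
    IsLaxInit T (N.F.obj x) := by
  intro Y m hm
  haveI := hm
  obtain ⟨Y', h, g, hg⟩ := hAx0 Y (T.obj x) ((asIso m).symm ≪≫ eqToIso (N.fiber_eq x))
  obtain ⟨g', hg', hgu⟩ := N.initial x Y' h
  simp only [Iso.trans_hom, Iso.symm_hom, asIso_inv, eqToIso.hom, Category.assoc] at hg
  have hginv : T.map g.inv = eqToHom h ≫ eqToHom (N.fiber_eq x).symm ≫ m := by
    have : T.map g.hom ≫ (eqToHom h ≫ eqToHom (N.fiber_eq x).symm ≫ m) = 𝟙 _ := by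
      rw [hg]; simp [eqToHom_trans]
    rw [← Category.comp_id (T.map g.inv), ← this, ← Category.assoc, ← T.map_comp,
      g.inv_hom_id, T.map_id, Category.id_comp]
  refine ⟨g' ≫ g.inv, ?_, ?_⟩
  · simp [hg', hginv, eqToHom_trans]
  · intro t ht
    have e1 : T.map (t ≫ g.hom) = eqToHom ((N.fiber_eq x).trans h.symm) := by
      rw [T.map_comp, ht, hg, IsIso.hom_inv_id_assoc]
      simp [eqToHom_trans]
    have e2 := hgu (t ≫ g.hom) e1
    rw [← e2, Category.assoc, g.hom_inv_id, Category.comp_id]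

theorem laxTerm_endo_id (T : C ⥤ A) {Z : C} (hZ : IsLaxTerm T Z) (g : Z ⟶ Z)
    (hg : T.map g = 𝟙 _) : g = 𝟙 Z := by
  obtain ⟨u, -, huu⟩ := hZ Z (𝟙 _) inferInstance
  rw [huu g hg, huu (𝟙 Z) (by simp)]

theorem laxInit_endo_id (T : C ⥤ A) {Z : C} (hZ : IsLaxInit T Z) (g : Z ⟶ Z)
    (hg : T.map g = 𝟙 _) : g = 𝟙 Z := by
  obtain ⟨u, -, huu⟩ := hZ Z (𝟙 _) inferInstance
  rw [huu g hg, huu (𝟙 Z) (by simp)]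

theorem laxTerm_comparison (T : C ⥤ A) {Z Z' : C} (hZ : IsLaxTerm T Z) (hZ' : IsLaxTerm T Z')
    (m : T.obj Z' ⟶ T.obj Z) (hm : IsIso m) :
    ∃ (g : Z' ⟶ Z) (g' : Z ⟶ Z'), T.map g = m ∧ g ≫ g' = 𝟙 Z' ∧ g' ≫ g = 𝟙 Z := by
  haveI := hm
  obtain ⟨g, hg, -⟩ := hZ Z' m hm
  obtain ⟨g', hg', -⟩ := hZ' Z (inv m) inferInstance
  exact ⟨g, g', hg,
    laxTerm_endo_id T hZ' _ (by rw [T.map_comp, hg, hg']; simp),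
    laxTerm_endo_id T hZ _ (by rw [T.map_comp, hg, hg']; simp)⟩

theorem laxInit_comparison (T : C ⥤ A) {Z Z' : C} (hZ : IsLaxInit T Z) (hZ' : IsLaxInit T Z')
    (m : T.obj Z ⟶ T.obj Z') (hm : IsIso m) :
    ∃ (g : Z ⟶ Z') (g' : Z' ⟶ Z), T.map g = m ∧ g ≫ g' = 𝟙 Z ∧ g' ≫ g = 𝟙 Z' := by
  haveI := hm
  obtain ⟨g, hg, -⟩ := hZ Z' m hm
  obtain ⟨g', hg', -⟩ := hZ' Z (inv m) inferInstance
  exact ⟨g, g', hg,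
    laxInit_endo_id T hZ _ (by rw [T.map_comp, hg, hg']; simp),
    laxInit_endo_id T hZ' _ (by rw [T.map_comp, hg, hg']; simp)⟩

theorem cancelTerm (T : C ⥤ A) [HasPushouts C] [PreservesColimitsOfShape WalkingSpan T]
    {Z P Y : C} (hZ : IsLaxTerm T Z) (j : P ⟶ Y) (hj : IsIso (T.map j))
    (h₁ h₂ : Y ⟶ Z) (e : j ≫ h₁ = j ≫ h₂) : h₁ = h₂ := by
  haveI := hj
  set q : P ⟶ Z := j ≫ h₁ with hq
  let k₁ : pushout j q ⟶ Z := pushout.desc h₁ (𝟙 Z) (by simp [hq])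
  let k₂ : pushout j q ⟶ Z := pushout.desc h₂ (𝟙 Z) (by rw [Category.comp_id, ← e])
  haveI : HasPushout (T.map j) (T.map q) := hasPushout_of_preservesPushout T j q
  haveI : IsIso (T.map (pushout.inr j q)) := by
    rw [← PreservesPushout.inr_iso_hom]
    infer_instance
  have hT : ∀ k : pushout j q ⟶ Z, pushout.inr j q ≫ k = 𝟙 Z →
      T.map k = inv (T.map (pushout.inr j q)) := by
    intro k hk
    symm
    apply IsIso.inv_eq_of_hom_inv_id
    rw [← T.map_comp, hk, T.map_id]
  obtain ⟨u, -, huu⟩ := hZ (pushout j q) (inv (T.map (pushout.inr j q))) inferInstance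
  have e12 : k₁ = k₂ := by
    rw [huu k₁ (hT k₁ (by exact pushout.inr_desc _ _ _)), huu k₂ (hT k₂ (by exact pushout.inr_desc _ _ _))]
  have l1 : pushout.inl j q ≫ k₁ = h₁ := by exact pushout.inl_desc _ _ _
  have l2 : pushout.inl j q ≫ k₂ = h₂ := by exact pushout.inl_desc _ _ _
  rw [← l1, ← l2, e12]

theorem cancelInit (T : C ⥤ A) [HasPullbacks C] [PreservesLimitsOfShape WalkingCospan T]
    {Z P Y : C} (hZ : IsLaxInit T Z) (j : Y ⟶ P) (hj : IsIso (T.map j))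
    (h₁ h₂ : Z ⟶ Y) (e : h₁ ≫ j = h₂ ≫ j) : h₁ = h₂ := by
  haveI := hj
  set q : Z ⟶ P := h₁ ≫ j with hq
  let k₁ : Z ⟶ pullback j q := pullback.lift h₁ (𝟙 Z) (by simp [hq])
  let k₂ : Z ⟶ pullback j q := pullback.lift h₂ (𝟙 Z) (by rw [Category.id_comp, ← e])
  haveI : HasPullback (T.map j) (T.map q) := hasPullback_of_preservesPullback T j q
  haveI : IsIso (T.map (pullback.snd j q)) := by
    rw [← PreservesPullback.iso_hom_snd]
    infer_instance
  have hT : ∀ k : Z ⟶ pullback j q, k ≫ pullback.snd j q = 𝟙 Z →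
      T.map k = inv (T.map (pullback.snd j q)) := by
    intro k hk
    symm
    apply IsIso.inv_eq_of_inv_hom_id
    rw [← T.map_comp, hk, T.map_id]
  obtain ⟨u, -, huu⟩ := hZ (pullback j q) (inv (T.map (pullback.snd j q))) inferInstance
  have e12 : k₁ = k₂ := by
    rw [huu k₁ (hT k₁ (by exact pullback.lift_snd _ _ _)), huu k₂ (hT k₂ (by exact pullback.lift_snd _ _ _))]
  have l1 : k₁ ≫ pullback.fst j q = h₁ := by exact pullback.lift_fst _ _ _
  have l2 : k₂ ≫ pullback.fst j q = h₂ := by exact pullback.lift_fst _ _ _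
  rw [← l1, ← l2, e12]

theorem maxOf_laxTerm (T : C ⥤ A) (hAx0 : Ax0 T) (M : MaxData T) {Z : C}
    (hZ : IsLaxTerm T Z) : IsIso (M.ι.app Z) := by
  have tF := max_laxTerm T hAx0 M Z
  obtain ⟨s, hs, -⟩ := hZ (M.F.obj Z) (eqToHom (M.fiber_eq Z)) inferInstance
  refine ⟨s, ?_, ?_⟩
  · exact laxTerm_endo_id T hZ _ (by rw [T.map_comp, hs, M.ι_eq]; simp)
  · exact laxTerm_endo_id T tF _ (by rw [T.map_comp, hs, M.ι_eq]; simp)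

theorem minOf_laxInit (T : C ⥤ A) (hAx0 : Ax0 T) (N : MinData T) {Z : C}
    (hZ : IsLaxInit T Z) : IsIso (N.ι.app Z) := by
  have tF := min_laxInit T hAx0 N Z
  obtain ⟨s, hs, -⟩ := hZ (N.F.obj Z) (eqToHom (N.fiber_eq Z).symm) inferInstance
  refine ⟨s, ?_, ?_⟩
  · exact laxInit_endo_id T tF _ (by rw [T.map_comp, hs, N.ι_eq]; simp)
  · exact laxInit_endo_id T hZ _ (by rw [T.map_comp, hs, N.ι_eq]; simp)

theorem laxTerm_of_pmax (T : C ⥤ A) (hAx0 : Ax0 T) (M : MaxData T) {Z : C}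
    (h : IsIso (M.ι.app Z)) : IsLaxTerm T Z := by
  haveI := h
  intro Y m hm
  haveI := hm
  have tF := max_laxTerm T hAx0 M Z
  obtain ⟨g', hg', hgu⟩ := tF Y (m ≫ eqToHom (M.fiber_eq Z).symm) inferInstance
  have hinv : T.map (inv (M.ι.app Z)) = eqToHom (M.fiber_eq Z) := by
    rw [← cancel_epi (T.map (M.ι.app Z)), ← T.map_comp, IsIso.hom_inv_id, T.map_id, M.ι_eq]
    simp [eqToHom_trans]
  refine ⟨g' ≫ inv (M.ι.app Z), ?_, ?_⟩
  · show T.map _ = _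
    rw [T.map_comp, hg', hinv]
    simp [eqToHom_trans]
  · intro t ht
    have : t ≫ M.ι.app Z = g' := hgu _ (by show T.map _ = _; rw [T.map_comp, ht, M.ι_eq])
    rw [← this]
    simp

theorem laxInit_of_pmin (T : C ⥤ A) (hAx0 : Ax0 T) (N : MinData T) {Z : C}
    (h : IsIso (N.ι.app Z)) : IsLaxInit T Z := by
  haveI := h
  intro Y m hm
  haveI := hm
  have tF := min_laxInit T hAx0 N Z
  obtain ⟨g', hg', hgu⟩ := tF Y (eqToHom (N.fiber_eq Z) ≫ m) inferInstance
  have hinv : T.map (inv (N.ι.app Z)) = eqToHom (N.fiber_eq Z).symm := by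
    rw [← cancel_epi (T.map (N.ι.app Z)), ← T.map_comp, IsIso.hom_inv_id, T.map_id, N.ι_eq]
    simp [eqToHom_trans]
  refine ⟨inv (N.ι.app Z) ≫ g', ?_, ?_⟩
  · show T.map _ = _
    rw [T.map_comp, hg', hinv]
    simp [eqToHom_trans]
  · intro t ht
    have : N.ι.app Z ≫ t = g' := hgu _ (by show T.map _ = _; rw [T.map_comp, ht, N.ι_eq])
    rw [← this]
    simp

section Dual

variable (T : C ⥤ A) (DC : DualityData C) (DA : DualityData A)
theorem T_map_D (compat : DC.D ⋙ T ≅ T.op ⋙ DA.D) {P Q : Cᵒᵖ} (h : P ⟶ Q) :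
    T.map (DC.D.map h) = compat.hom.app P ≫ DA.D.map (T.map h.unop).op ≫ compat.inv.app Q := by
  have h1 := compat.hom.naturality h
  simp only [Functor.comp_map, Functor.op_map] at h1
  rw [← Category.assoc, ← h1]
  simp

theorem T_map_MF (M : MaxData T) {P Q : C} (h : P ⟶ Q) :
    T.map (M.F.map h) = eqToHom (M.fiber_eq P) ≫ T.map h ≫ eqToHom (M.fiber_eq Q).symm := by
  have h1 := M.ι.naturality h
  simp only [Functor.id_map] at h1
  have h2 := congrArg T.map h1
  rw [T.map_comp, T.map_comp, M.ι_eq, M.ι_eq] at h2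
  rw [h2]
  simp

theorem T_map_NF (N : MinData T) {P Q : C} (h : P ⟶ Q) :
    T.map (N.F.map h) = eqToHom (N.fiber_eq P) ≫ T.map h ≫ eqToHom (N.fiber_eq Q).symm := by
  have h1 := N.ι.naturality h
  simp only [Functor.id_map] at h1
  have h2 := congrArg T.map h1
  rw [T.map_comp, T.map_comp, N.ι_eq, N.ι_eq] at h2
  rw [← Category.assoc, ← h2]
  simp

theorem dual_laxTerm [DC.D.Full] [DC.D.Faithful] [DA.D.Full] [DA.D.Faithful]
    (compat : DC.D ⋙ T ≅ T.op ⋙ DA.D) {Z : C} (hZ : IsLaxInit T Z) : IsLaxTerm T (DC.D.obj (op Z)) := by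
  intro Y m hm
  haveI := hm
  let θ : T.obj Y ⟶ DA.D.obj (op (T.obj (DC.D.obj (op Y)))) :=
    T.map (DC.invol.inv.app Y) ≫ compat.hom.app (op (DC.D.obj (op Y)))
  haveI : IsIso θ := by
    haveI : IsIso (T.map (DC.invol.inv.app Y)) := inferInstance
    exact IsIso.comp_isIso
  have TΨ : ∀ (h : Z ⟶ DC.D.obj (op Y)),
      T.map (DC.invol.inv.app Y ≫ DC.D.map h.op) =
        θ ≫ DA.D.map (T.map h).op ≫ compat.inv.app (op Z) := by
    intro h
    rw [T.map_comp, T_map_D T DC DA compat h.op]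
    simp [θ]
  let n : DA.D.obj (op (T.obj (DC.D.obj (op Y)))) ⟶ DA.D.obj (op (T.obj Z)) :=
    inv θ ≫ m ≫ compat.hom.app (op Z)
  haveI : IsIso n := by dsimp only [n]; infer_instance
  haveI : IsIso (DA.D.preimage n) := by
    haveI : IsIso (DA.D.map (DA.D.preimage n)) := by rw [DA.D.map_preimage]; infer_instance
    exact isIso_of_reflects_iso _ DA.D
  let m' : T.obj Z ⟶ T.obj (DC.D.obj (op Y)) := (DA.D.preimage n).unop
  haveI : IsIso m' := inferInstance
  have hmapm' : DA.D.map (m'.op) = n := by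
    show DA.D.map ((DA.D.preimage n).unop.op) = n
    rw [Quiver.Hom.op_unop, DA.D.map_preimage]
  obtain ⟨h₀, hh₀, hh₀u⟩ := hZ (DC.D.obj (op Y)) m' this
  refine ⟨DC.invol.inv.app Y ≫ DC.D.map h₀.op, ?_, ?_⟩
  · show T.map _ = m
    rw [TΨ h₀, hh₀, hmapm']
    simp [n]
  · intro g' hg'
    have hg'' : g' = DC.invol.inv.app Y ≫
        DC.D.map ((DC.D.preimage (DC.invol.hom.app Y ≫ g')).unop.op) := by
      rw [Quiver.Hom.op_unop, DC.D.map_preimage, Iso.inv_hom_id_app_assoc]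
    set h' : Z ⟶ DC.D.obj (op Y) := (DC.D.preimage (DC.invol.hom.app Y ≫ g')).unop with hh'
    have hTh' : T.map h' = m' := by
      have e3 : θ ≫ DA.D.map (T.map h').op ≫ compat.inv.app (op Z) = m := by
        rw [← TΨ h', ← hg'']; exact hg'
      have e4 : DA.D.map (T.map h').op = inv θ ≫ m ≫ compat.hom.app (op Z) := by
        rw [← e3]; simp
      have e5 : (T.map h').op = DA.D.preimage n :=
        DA.D.map_injective (by rw [DA.D.map_preimage, e4])
      have e6 := congrArg Quiver.Hom.unop e5
      simpa using e6
    rw [hg'', hh₀u h' hTh']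

theorem dual_laxInit [DC.D.Full] [DC.D.Faithful] [DA.D.Full] [DA.D.Faithful]
    (compat : DC.D ⋙ T ≅ T.op ⋙ DA.D) {Z : C} (hZ : IsLaxTerm T Z) : IsLaxInit T (DC.D.obj (op Z)) := by
  intro Y m hm
  haveI := hm
  let θ : DA.D.obj (op (T.obj (DC.D.obj (op Y)))) ⟶ T.obj Y :=
    compat.inv.app (op (DC.D.obj (op Y))) ≫ T.map (DC.invol.hom.app Y)
  haveI : IsIso θ := by
    haveI : IsIso (T.map (DC.invol.hom.app Y)) := inferInstance
    exact IsIso.comp_isIso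
  have TΨ : ∀ (h : DC.D.obj (op Y) ⟶ Z),
      T.map (DC.D.map h.op ≫ DC.invol.hom.app Y) =
        compat.hom.app (op Z) ≫ DA.D.map (T.map h).op ≫ θ := by
    intro h
    rw [T.map_comp, T_map_D T DC DA compat h.op]
    simp [θ]
  let n : DA.D.obj (op (T.obj Z)) ⟶ DA.D.obj (op (T.obj (DC.D.obj (op Y)))) :=
    compat.inv.app (op Z) ≫ m ≫ inv θ
  haveI : IsIso n := by dsimp only [n]; infer_instance
  haveI : IsIso (DA.D.preimage n) := by
    haveI : IsIso (DA.D.map (DA.D.preimage n)) := by rw [DA.D.map_preimage]; infer_instance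
    exact isIso_of_reflects_iso _ DA.D
  let m' : T.obj (DC.D.obj (op Y)) ⟶ T.obj Z := (DA.D.preimage n).unop
  haveI : IsIso m' := inferInstance
  have hmapm' : DA.D.map (m'.op) = n := by
    show DA.D.map ((DA.D.preimage n).unop.op) = n
    rw [Quiver.Hom.op_unop, DA.D.map_preimage]
  obtain ⟨h₀, hh₀, hh₀u⟩ := hZ (DC.D.obj (op Y)) m' this
  refine ⟨DC.D.map h₀.op ≫ DC.invol.hom.app Y, ?_, ?_⟩
  · show T.map _ = m
    rw [TΨ h₀, hh₀, hmapm']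
    simp [n]
  · intro g' hg'
    have hg'' : g' = DC.D.map ((DC.D.preimage (g' ≫ DC.invol.inv.app Y)).unop.op) ≫
        DC.invol.hom.app Y := by
      rw [Quiver.Hom.op_unop, DC.D.map_preimage]
      simp
    set h' : DC.D.obj (op Y) ⟶ Z := (DC.D.preimage (g' ≫ DC.invol.inv.app Y)).unop with hh'
    have hTh' : T.map h' = m' := by
      have e3 : compat.hom.app (op Z) ≫ DA.D.map (T.map h').op ≫ θ = m := by
        rw [← TΨ h', ← hg'']; exact hg'
      have e4 : DA.D.map (T.map h').op = compat.inv.app (op Z) ≫ m ≫ inv θ := by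
        rw [← e3]; simp
      have e5 : (T.map h').op = DA.D.preimage n :=
        DA.D.map_injective (by rw [DA.D.map_preimage, e4])
      have e6 := congrArg Quiver.Hom.unop e5
      simpa using e6
    rw [hg'', hh₀u h' hTh']

end Dual

section Parts

variable (T : C ⥤ A) (DC : DualityData C) (DA : DualityData A)

theorem part1 (hAx0 : Ax0 T) [HasPushouts C] [PreservesColimitsOfShape WalkingSpan T]
    (M : MaxData T) (N : MinData T)
    [DC.D.Full] [DC.D.Faithful] [DA.D.Full] [DA.D.Faithful]
    (compat : DC.D ⋙ T ≅ T.op ⋙ DA.D) :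
    Nonempty ((DC.D ⋙ M.F) ≅ (N.F.op ⋙ DC.D)) := by
  have hσ : ∀ X : Cᵒᵖ, IsIso (T.map (DC.D.map (N.ι.app X.unop).op)) := by
    intro X
    rw [T_map_D T DC DA compat]
    simp only [Quiver.Hom.unop_op, N.ι_eq, eqToHom_op, eqToHom_map]
    infer_instance
  have tD : ∀ X : Cᵒᵖ, IsLaxTerm T (DC.D.obj (op (N.F.obj X.unop))) := fun X =>
    dual_laxTerm T DC DA compat (min_laxInit T hAx0 N X.unop)
  have H : ∀ X : Cᵒᵖ, ∃ (g : M.F.obj (DC.D.obj X) ⟶ DC.D.obj (op (N.F.obj X.unop)))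
      (g' : DC.D.obj (op (N.F.obj X.unop)) ⟶ M.F.obj (DC.D.obj X)),
      T.map g = eqToHom (M.fiber_eq (DC.D.obj X)) ≫ T.map (DC.D.map (N.ι.app X.unop).op) ∧
      g ≫ g' = 𝟙 _ ∧ g' ≫ g = 𝟙 _ := by
    intro X
    haveI := hσ X
    exact laxTerm_comparison T (tD X) (max_laxTerm T hAx0 M _) _ inferInstance
  choose α β hα hc1 hc2 using H
  have hκ : ∀ X : Cᵒᵖ, M.ι.app (DC.D.obj X) ≫ α X = DC.D.map (N.ι.app X.unop).op := by
    intro X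
    obtain ⟨u, -, huu⟩ := tD X (DC.D.obj X) (T.map (DC.D.map (N.ι.app X.unop).op)) (hσ X)
    have e1 := huu (M.ι.app (DC.D.obj X) ≫ α X)
      (by show T.map _ = _; rw [T.map_comp, M.ι_eq, hα]; simp [eqToHom_trans])
    have e2 := huu (DC.D.map (N.ι.app X.unop).op) rfl
    rw [e1, e2]
  have nat : ∀ {X X' : Cᵒᵖ} (ϕ : X ⟶ X'),
      M.F.map (DC.D.map ϕ) ≫ α X' = α X ≫ DC.D.map (N.F.op.map ϕ) := by
    intro X X' ϕ
    refine cancelTerm T (tD X') (M.ι.app (DC.D.obj X)) ?_ _ _ ?_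
    · rw [M.ι_eq]; infer_instance
    · have l1 : M.ι.app (DC.D.obj X) ≫ M.F.map (DC.D.map ϕ) ≫ α X' =
          DC.D.map ϕ ≫ DC.D.map (N.ι.app X'.unop).op := by
        rw [← Category.assoc, ← M.ι.naturality (DC.D.map ϕ)]
        simp only [Functor.id_map, Category.assoc, hκ]
      have l2 : M.ι.app (DC.D.obj X) ≫ α X ≫ DC.D.map (N.F.op.map ϕ) =
          DC.D.map (N.ι.app X.unop).op ≫ DC.D.map (N.F.op.map ϕ) := by
        rw [← Category.assoc, hκ]
      rw [l1, l2, ← DC.D.map_comp, ← DC.D.map_comp]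
      congr 1
      apply Quiver.Hom.unop_inj
      simpa using (N.ι.naturality ϕ.unop)
  exact ⟨NatIso.ofComponents (fun X => ⟨α X, β X, hc1 X, hc2 X⟩)
    (fun {X X'} ϕ => by simpa using nat ϕ)⟩

theorem part2 (hAx0 : Ax0 T) [HasPullbacks C] [PreservesLimitsOfShape WalkingCospan T]
    (M : MaxData T) (N : MinData T)
    [DC.D.Full] [DC.D.Faithful] [DA.D.Full] [DA.D.Faithful]
    (compat : DC.D ⋙ T ≅ T.op ⋙ DA.D) :
    Nonempty ((DC.D ⋙ N.F) ≅ (M.F.op ⋙ DC.D)) := by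
  have hσ : ∀ X : Cᵒᵖ, IsIso (T.map (DC.D.map (M.ι.app X.unop).op)) := by
    intro X
    rw [T_map_D T DC DA compat]
    simp only [Quiver.Hom.unop_op, M.ι_eq, eqToHom_op, eqToHom_map]
    infer_instance
  have tI : ∀ X : Cᵒᵖ, IsLaxInit T (DC.D.obj (op (M.F.obj X.unop))) := fun X =>
    dual_laxInit T DC DA compat (max_laxTerm T hAx0 M X.unop)
  have H : ∀ X : Cᵒᵖ, ∃ (g : N.F.obj (DC.D.obj X) ⟶ DC.D.obj (op (M.F.obj X.unop)))
      (g' : DC.D.obj (op (M.F.obj X.unop)) ⟶ N.F.obj (DC.D.obj X)),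
      T.map g = eqToHom (N.fiber_eq (DC.D.obj X)) ≫ inv (T.map (DC.D.map (M.ι.app X.unop).op)) ∧
      g ≫ g' = 𝟙 _ ∧ g' ≫ g = 𝟙 _ := by
    intro X
    haveI := hσ X
    exact laxInit_comparison T (min_laxInit T hAx0 N _) (tI X) _ inferInstance
  choose α β hα hc1 hc2 using H
  have hκ : ∀ X : Cᵒᵖ, α X ≫ DC.D.map (M.ι.app X.unop).op = N.ι.app (DC.D.obj X) := by
    intro X
    obtain ⟨u, -, huu⟩ := min_laxInit T hAx0 N (DC.D.obj X) (DC.D.obj X)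
      (eqToHom (N.fiber_eq (DC.D.obj X))) inferInstance
    haveI := hσ X
    have e1 := huu (α X ≫ DC.D.map (M.ι.app X.unop).op)
      (by show T.map _ = _; rw [T.map_comp, hα]; simp)
    have e2 := huu (N.ι.app (DC.D.obj X)) (N.ι_eq _)
    rw [e1, e2]
  have nat : ∀ {X X' : Cᵒᵖ} (ϕ : X ⟶ X'),
      N.F.map (DC.D.map ϕ) ≫ α X' = α X ≫ DC.D.map (M.F.op.map ϕ) := by
    intro X X' ϕ
    refine cancelInit T (min_laxInit T hAx0 N (DC.D.obj X))
      (DC.D.map (M.ι.app X'.unop).op) (hσ X') _ _ ?_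
    have l1 : (N.F.map (DC.D.map ϕ) ≫ α X') ≫ DC.D.map (M.ι.app X'.unop).op =
        N.ι.app (DC.D.obj X) ≫ DC.D.map ϕ := by
      rw [Category.assoc, hκ, N.ι.naturality (DC.D.map ϕ)]
      simp
    have l2 : (α X ≫ DC.D.map (M.F.op.map ϕ)) ≫ DC.D.map (M.ι.app X'.unop).op =
        α X ≫ DC.D.map (M.ι.app X.unop).op ≫ DC.D.map ϕ := by
      rw [Category.assoc, ← DC.D.map_comp, ← DC.D.map_comp]
      congr 2
      apply Quiver.Hom.unop_inj
      simpa using (M.ι.naturality ϕ.unop).symm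
    rw [l1, l2, ← Category.assoc, hκ]
  exact ⟨NatIso.ofComponents (fun X => ⟨α X, β X, hc1 X, hc2 X⟩)
    (fun {X X'} ϕ => by simpa using nat ϕ)⟩

theorem part5 (hAx0 : Ax0 T) [HasPushouts C] [PreservesColimitsOfShape WalkingSpan T]
    (M : MaxData T)
    [DC.D.Full] [DC.D.Faithful] [DA.D.Full] [DA.D.Faithful]
    (compat : DC.D ⋙ T ≅ T.op ⋙ DA.D) :
    ∃ Dmax : (ObjectProperty.FullSubcategory (Pmax M))ᵒᵖ ⥤ ObjectProperty.FullSubcategory (Pmax M),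
      Nonempty (Dmax ⋙ ObjectProperty.ι (Pmax M) ≅
        (ObjectProperty.ι (Pmax M)).op ⋙ DC.D ⋙ M.F) ∧
      Nonempty (Dmax.rightOp ⋙ Dmax ≅ 𝟭 (ObjectProperty.FullSubcategory (Pmax M))) ∧
      Nonempty ((Dmax ⋙ (ObjectProperty.ι (Pmax M) ⋙ T)) ≅
        ((ObjectProperty.ι (Pmax M) ⋙ T).op ⋙ DA.D)) := by
  refine ⟨ObjectProperty.lift (Pmax M) ((ObjectProperty.ι (Pmax M)).op ⋙ DC.D ⋙ M.F)
    (fun X => maxOf_laxTerm T hAx0 M (max_laxTerm T hAx0 M _)), ?_, ?_, ?_⟩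
  · exact ⟨ObjectProperty.liftCompιIso _ _ _⟩
  · -- the counit
    have H : ∀ X : ObjectProperty.FullSubcategory (Pmax M),
        ∃ (g : M.F.obj (DC.D.obj (op (M.F.obj (DC.D.obj (op X.obj))))) ⟶ X.obj)
        (g' : X.obj ⟶ M.F.obj (DC.D.obj (op (M.F.obj (DC.D.obj (op X.obj)))))),
        T.map g = eqToHom (M.fiber_eq _) ≫
          T.map (DC.D.map ((M.ι.app (DC.D.obj (op X.obj))).op) ≫ DC.invol.hom.app X.obj) ∧
        g ≫ g' = 𝟙 _ ∧ g' ≫ g = 𝟙 _ := by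
      intro X
      have hρT : IsIso (T.map (DC.D.map ((M.ι.app (DC.D.obj (op X.obj))).op) ≫
          DC.invol.hom.app X.obj)) := by
        rw [T.map_comp, T_map_D T DC DA compat]
        simp only [Quiver.Hom.unop_op, M.ι_eq, eqToHom_op, eqToHom_map]
        infer_instance
      exact laxTerm_comparison T (laxTerm_of_pmax T hAx0 M X.property)
        (max_laxTerm T hAx0 M _) _ inferInstance
    choose ε ε' hε hc1 hc2 using H
    have hρT : ∀ x : C, IsIso (T.map (DC.D.map ((M.ι.app (DC.D.obj (op x))).op) ≫
        DC.invol.hom.app x)) := by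
      intro x
      rw [T.map_comp, T_map_D T DC DA compat]
      simp only [Quiver.Hom.unop_op, M.ι_eq, eqToHom_op, eqToHom_map]
      infer_instance
    have hδ : ∀ X : ObjectProperty.FullSubcategory (Pmax M),
        M.ι.app (DC.D.obj (op (M.F.obj (DC.D.obj (op X.obj))))) ≫ ε X =
          DC.D.map ((M.ι.app (DC.D.obj (op X.obj))).op) ≫ DC.invol.hom.app X.obj := by
      intro X
      obtain ⟨u, -, huu⟩ := laxTerm_of_pmax T hAx0 M X.property _
        (T.map (DC.D.map ((M.ι.app (DC.D.obj (op X.obj))).op) ≫ DC.invol.hom.app X.obj))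
        (hρT X.obj)
      have e1 := huu (M.ι.app _ ≫ ε X)
        (by show T.map _ = _; rw [T.map_comp, M.ι_eq, hε]; simp [eqToHom_trans])
      have e2 := huu _ rfl
      rw [e1, e2]
    have core : ∀ {x y : C} (f : x ⟶ y),
        DC.D.map ((M.F.map (DC.D.map f.op)).op) ≫
          (DC.D.map ((M.ι.app (DC.D.obj (op y))).op) ≫ DC.invol.hom.app y) =
        (DC.D.map ((M.ι.app (DC.D.obj (op x))).op) ≫ DC.invol.hom.app x) ≫ f := by
      intro x y f
      have n1 := M.ι.naturality (DC.D.map f.op)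
      simp only [Functor.id_map] at n1
      have n2 := DC.invol.hom.naturality f
      simp only [Functor.comp_map, Functor.rightOp_map, Functor.id_map] at n2
      calc DC.D.map ((M.F.map (DC.D.map f.op)).op) ≫
            (DC.D.map ((M.ι.app (DC.D.obj (op y))).op) ≫ DC.invol.hom.app y)
          = DC.D.map ((M.ι.app (DC.D.obj (op y)) ≫ M.F.map (DC.D.map f.op)).op) ≫
              DC.invol.hom.app y := by rw [← Category.assoc, ← DC.D.map_comp, ← op_comp]
        _ = DC.D.map ((DC.D.map f.op ≫ M.ι.app (DC.D.obj (op x))).op) ≫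
              DC.invol.hom.app y := by rw [n1]
        _ = DC.D.map ((M.ι.app (DC.D.obj (op x))).op) ≫
              (DC.D.map ((DC.D.map f.op).op) ≫ DC.invol.hom.app y) := by
              rw [op_comp, DC.D.map_comp, Category.assoc]
        _ = DC.D.map ((M.ι.app (DC.D.obj (op x))).op) ≫ (DC.invol.hom.app x ≫ f) := by rw [n2]
        _ = (DC.D.map ((M.ι.app (DC.D.obj (op x))).op) ≫ DC.invol.hom.app x) ≫ f := by
              rw [Category.assoc]
    have nat : ∀ {X Y : ObjectProperty.FullSubcategory (Pmax M)} (f : X ⟶ Y),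
        M.F.map (DC.D.map ((M.F.map (DC.D.map ((ObjectProperty.ι (Pmax M)).map f).op)).op)) ≫
          ε Y = ε X ≫ (ObjectProperty.ι (Pmax M)).map f := by
      intro X Y f
      refine cancelTerm T (laxTerm_of_pmax T hAx0 M Y.property)
        (M.ι.app (DC.D.obj (op (M.F.obj (DC.D.obj (op X.obj)))))) ?_ _ _ ?_
      · rw [M.ι_eq]; infer_instance
      · have n1 := M.ι.naturality
          (DC.D.map ((M.F.map (DC.D.map ((ObjectProperty.ι (Pmax M)).map f).op)).op))
        simp only [Functor.id_map, ObjectProperty.ι_obj] at n1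
        rw [← Category.assoc, ← n1, Category.assoc, hδ Y, core, ← hδ X, Category.assoc]
    exact ⟨NatIso.ofComponents (fun X => ObjectProperty.isoMk _ ⟨ε X, ε' X, hc1 X, hc2 X⟩)
      (fun {X Y} f => by ext; exact nat f)⟩
  · -- compatibility with T
    refine ⟨NatIso.ofComponents
      (fun X => eqToIso (M.fiber_eq (DC.D.obj (op X.unop.obj))) ≪≫ compat.app (op X.unop.obj))
      ?_⟩
    intro X X' ϕ
    dsimp
    change T.map (M.F.map (DC.D.map ϕ.unop.hom.op)) ≫ _ = _
    rw [T_map_MF T M]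
    simp only [Category.assoc, eqToHom_trans_assoc, eqToHom_refl, Category.id_comp]
    congr 1
    have := compat.hom.naturality ((ObjectProperty.ι (Pmax M)).op.map ϕ)
    simp only [Functor.comp_map, Functor.op_map] at this
    exact this

end Parts

end PylAux

end PylAuxSection

/-- under (Ax0), (Ax2), (Ax3), (Ax2*), (Ax3*) and (Ax4) (dualities on `C` and
`A` compatible with `T`), one has natural isomorphisms `Max(C*) ≅ Min(C)*` and
`Min(C*) ≅ Max(C)*`; in particular the duality of `C` interchanges `Min(C)` and `Max(C)`,
and `C ↦ Max(C*)` defines a duality on `Max(C)` compatible with the restriction of `T`. -/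
theorem duality_exchanges_min_max (T : C ⥤ A) (hAx0 : Ax0 T)
    [HasPushouts C] [HasPushouts A] [PreservesColimitsOfShape WalkingSpan T]
    [HasPullbacks C] [HasPullbacks A] [PreservesLimitsOfShape WalkingCospan T]
    (M : MaxData T) (N : MinData T)
    (DC : DualityData C) (DA : DualityData A)
    (compat : DC.D ⋙ T ≅ T.op ⋙ DA.D) :
    Nonempty ((DC.D ⋙ M.F) ≅ (N.F.op ⋙ DC.D)) ∧
    Nonempty ((DC.D ⋙ N.F) ≅ (M.F.op ⋙ DC.D)) ∧
    (∀ X : C, Pmax M X → Pmin N (DC.D.obj (Opposite.op X))) ∧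
    (∀ X : C, Pmin N X → Pmax M (DC.D.obj (Opposite.op X))) ∧
    ∃ Dmax : (ObjectProperty.FullSubcategory (Pmax M))ᵒᵖ ⥤ ObjectProperty.FullSubcategory (Pmax M),
      Nonempty (Dmax ⋙ ObjectProperty.ι (Pmax M) ≅
        (ObjectProperty.ι (Pmax M)).op ⋙ DC.D ⋙ M.F) ∧
      Nonempty (Dmax.rightOp ⋙ Dmax ≅ 𝟭 (ObjectProperty.FullSubcategory (Pmax M))) ∧
      Nonempty ((Dmax ⋙ (ObjectProperty.ι (Pmax M) ⋙ T)) ≅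
        ((ObjectProperty.ι (Pmax M) ⋙ T).op ⋙ DA.D)) := by
  haveI hC : DC.D.IsEquivalence :=
    Functor.IsEquivalence.mk' DC.D.rightOp (NatIso.op DC.invol) DC.invol
  haveI hA : DA.D.IsEquivalence :=
    Functor.IsEquivalence.mk' DA.D.rightOp (NatIso.op DA.invol) DA.invol
  exact ⟨PylAux.part1 T DC DA hAx0 M N compat, PylAux.part2 T DC DA hAx0 M N compat,
    fun X hX => PylAux.minOf_laxInit T hAx0 N
      (PylAux.dual_laxInit T DC DA compat (PylAux.laxTerm_of_pmax T hAx0 M hX)),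
    fun X hX => PylAux.maxOf_laxTerm T hAx0 M
      (PylAux.dual_laxTerm T DC DA compat (PylAux.laxInit_of_pmin T hAx0 N hX)),
    PylAux.part5 T DC DA hAx0 M compat⟩
end

section
/- Suppose T : C → A satisfies (Ax0), (Ax2), (Ax3) and (Ax5): C is additive, A is abelian, and T is additive. Then the functor Max : C → C is additive; in particular Max(C ⊕ C') is naturally isomorphic to Max(C) ⊕ Max(C'). -/
open CategoryTheory Limits

universe v₁ v₂ u₁ u₂

variable {C : Type u₁} [Category.{v₁} C] {A : Type u₂} [Category.{v₂} A]

attribute [local instance] hasBinaryBiproducts_of_finite_biproducts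

/-- under (Ax0), (Ax2), (Ax3) and (Ax5) (`C` additive, `A` abelian, `T`
additive), the functor `Max : C ⥤ C` is additive; in particular
`Max(C ⊕ C') ≅ Max(C) ⊕ Max(C')`. -/
theorem max_additive (T : C ⥤ A) (hAx0 : Ax0 T)
    [Preadditive C] [HasFiniteBiproducts C] [Abelian A] [T.Additive]
    [HasPushouts C] [HasPushouts A] [PreservesColimitsOfShape WalkingSpan T]
    (M : MaxData T) :
    M.F.Additive ∧
    (∀ X Y : C, Nonempty (M.F.obj (biprod X Y) ≅ biprod (M.F.obj X) (M.F.obj Y))) := by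
  classical
  -- Uniqueness of morphisms into maximal objects lying over an `eqToHom`.
  have hext : ∀ (X Y : C) (h : T.obj Y = T.obj X) (g₁ g₂ : Y ⟶ M.F.obj X),
      T.map g₁ = eqToHom (h.trans (M.fiber_eq X).symm) →
      T.map g₂ = eqToHom (h.trans (M.fiber_eq X).symm) → g₁ = g₂ := by
    intro X Y h g₁ g₂ h₁ h₂
    obtain ⟨g, -, hu⟩ := M.terminal X Y h
    rw [hu g₁ h₁, hu g₂ h₂]
  -- `ι` at maximal objects is an isomorphism.
  have hiso : ∀ X : C, IsIso (M.ι.app (M.F.obj X)) := by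
    intro X
    obtain ⟨s, hs, -⟩ :=
      M.terminal X (M.F.obj (M.F.obj X)) ((M.fiber_eq (M.F.obj X)).trans (M.fiber_eq X))
    have h1 : M.ι.app (M.F.obj X) ≫ s = 𝟙 (M.F.obj X) := by
      apply hext X (M.F.obj X) (M.fiber_eq X)
      · rw [T.map_comp, M.ι_eq, hs]
        simp
      · simp
    have h2 : s ≫ M.ι.app (M.F.obj X) = 𝟙 (M.F.obj (M.F.obj X)) := by
      apply hext (M.F.obj X) (M.F.obj (M.F.obj X)) (M.fiber_eq (M.F.obj X))
      · rw [T.map_comp, M.ι_eq, hs]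
        simp
      · simp
    exact ⟨s, h1, h2⟩
  -- `F` sends `ι_X` to `ι_{F X}`.
  have hFι : ∀ X : C, M.F.map (M.ι.app X) = M.ι.app (M.F.obj X) := by
    intro X
    apply hext (M.F.obj X) (M.F.obj X) rfl
    · -- compute `T.map (F.map (ι_X))` using naturality of `ι`
      have hnat : M.ι.app X ≫ M.F.map (M.ι.app X) = M.ι.app X ≫ M.ι.app (M.F.obj X) := by
        simpa using (M.ι.naturality (M.ι.app X)).symm
      have h2 := congrArg T.map hnat
      simp only [T.map_comp, M.ι_eq] at h2
      rw [← cancel_epi (eqToHom (M.fiber_eq X).symm), h2]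
    · rw [M.ι_eq]
  -- `F` of a zero object is a zero object.
  have hzeroC : HasZeroObject C := inferInstance
  obtain ⟨N, hN⟩ := hzeroC
  have hTN : IsZero (T.obj N) := T.map_isZero hN
  have hTFN : IsZero (T.obj (M.F.obj N)) := by rw [M.fiber_eq N]; exact hTN
  have hFN : IsZero (M.F.obj N) := by
    rw [IsZero.iff_id_eq_zero]
    apply hext N (M.F.obj N) (M.fiber_eq N)
    · simp
    · rw [T.map_zero]
      exact hTFN.eq_of_src _ _
  -- `F` preserves zero morphisms.
  have hF0 : ∀ (X Z : C), M.F.map (0 : X ⟶ Z) = 0 := by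
    intro X Z
    have : (0 : X ⟶ Z) = (0 : X ⟶ N) ≫ (0 : N ⟶ Z) := by simp
    rw [this, M.F.map_comp, hFN.eq_of_src (M.F.map (0 : N ⟶ Z)) 0, comp_zero]
  -- Key cancellation: maps out of `F X` vanishing after `ι_X` vanish.
  have key : ∀ (X Y : C) (d : M.F.obj X ⟶ M.F.obj Y), M.ι.app X ≫ d = 0 → d = 0 := by
    intro X Y d hd
    have hnat : M.ι.app (M.F.obj X) ≫ M.F.map d = d ≫ M.ι.app (M.F.obj Y) := by
      simpa using (M.ι.naturality d).symm
    have hFd : M.F.map (M.ι.app X) ≫ M.F.map d = 0 := by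
      rw [← M.F.map_comp, hd, hF0]
    rw [hFι X] at hFd
    haveI := hiso Y
    have hz : d ≫ M.ι.app (M.F.obj Y) = 0 := by rw [← hnat, hFd]
    exact (cancel_mono (M.ι.app (M.F.obj Y))).mp (by simpa using hz)
  -- Additivity.
  have hadd : M.F.Additive := by
    constructor
    intro X Y f g
    have hd : M.ι.app X ≫ (M.F.map (f + g) - M.F.map f - M.F.map g) = 0 := by
      have h1 := M.ι.naturality (f + g)
      have h2 := M.ι.naturality f
      have h3 := M.ι.naturality g
      simp only [Functor.id_map] at h1 h2 h3
      simp [Preadditive.comp_sub, ← h1, ← h2, ← h3, Preadditive.add_comp]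
    have := key X Y _ hd
    rw [sub_sub, sub_eq_zero] at this
    exact this
  refine ⟨hadd, fun X Y => ?_⟩
  haveI := hadd
  haveI : PreservesBinaryBiproducts M.F :=
    preservesBinaryBiproducts_of_preservesBiproducts M.F
  exact ⟨M.F.mapBiprod X Y⟩
end

section
/- Let p ≥ 3 be a prime, k a perfect field of characteristic p, K a finite totally ramified extension of W(k)[1/p] of ramification index e, π₁ a fixed p-th root of a uniformizer of K, G_K the absolute Galois group and G₁ = Gal(K̄/K(π₁)). For σ ∈ G_K let ε(σ) denote the image of σ(π₁)/π₁ in O_K̄/p (a p-th root of unity) and set t(σ) = Σ_{i=1}^{p-2} (1 − ε(σ))^i / i. Then t is a cocycle: t(σσ') = t(σ) + σ·t(σ') for all σ, σ' ∈ G_K; t(σ) = 0 for σ ∈ G₁; and for σ ∉ G₁, t(σ) has p-adic valuation 1/(p−1), so in particular t(σ)^{p−1} = 0 in O_K̄/p. -/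
open scoped BigOperators

def Tzc (p i : ℕ) : ℤ := (-1) ^ (i + 1) * ((p.choose i / p : ℕ) : ℤ)

noncomputable def Tsum (p : ℕ) {R : Type*} [CommRing R] (x : R) : R :=
  ∑ i ∈ Finset.Icc 1 (p - 1), ((Tzc p i : ℤ) : R) * x ^ i

lemma zmod_choose_sub_one {p : ℕ} (hp : p.Prime) :
    ∀ j, j ≤ p - 1 → (((p - 1).choose j : ℕ) : ZMod p) = (-1) ^ j := by
  intro j
  induction j with
  | zero => simp
  | succ j ih =>
    intro hj
    have hj' : j ≤ p - 1 := by omega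
    have h1 : (p - 1).choose j + (p - 1).choose (j + 1) = p.choose (j + 1) := by
      have := Nat.choose_succ_succ (p - 1) j
      have hq : p - 1 + 1 = p := by have := hp.two_le; omega
      simp only [Nat.succ_eq_add_one] at this
      rw [hq] at this
      omega
    have hd : p ∣ p.choose (j + 1) :=
      Nat.Prime.dvd_choose_self hp (Nat.succ_ne_zero j) (by have := hp.two_le; omega)
    have h0 : ((p.choose (j + 1) : ℕ) : ZMod p) = 0 :=
      (ZMod.natCast_eq_zero_iff _ _).mpr hd
    have := congrArg (fun n : ℕ => (n : ZMod p)) h1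
    simp only [Nat.cast_add, h0] at this
    have h2 := ih hj'
    rw [h2] at this
    have : ((p - 1).choose (j + 1) : ZMod p) = -(-1) ^ j := by linear_combination this
    rw [this]
    ring

lemma mul_Tzc {p : ℕ} (hp : p.Prime) {i : ℕ} (h1 : 1 ≤ i) (h2 : i ≤ p - 1) :
    (((i : ℤ) * Tzc p i : ℤ) : ZMod p) = 1 := by
  have hp0 : 0 < p := hp.pos
  have hip : i < p := by omega
  have hd : p ∣ p.choose i := Nat.Prime.dvd_choose_self hp (by omega) hip
  obtain ⟨k, hpk⟩ := hd
  have hdiv : p.choose i / p = k := by rw [hpk]; exact Nat.mul_div_cancel_left k hp0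
  have hTz : Tzc p i = (-1) ^ (i + 1) * (k : ℤ) := by rw [Tzc, hdiv]
  have hs := Nat.add_one_mul_choose_eq (p - 1) (i - 1)
  have hps : p - 1 + 1 = p := by omega
  have his : i - 1 + 1 = i := by omega
  rw [hps, his] at hs
  -- hs : p * (p-1).choose (i-1) = p.choose i * i
  have hki : k * i = (p - 1).choose (i - 1) := by
    have : p * (k * i) = p * ((p - 1).choose (i - 1)) := by
      rw [hs, hpk]; ring
    exact Nat.eq_of_mul_eq_mul_left hp0 this
  rw [hTz]
  push_cast
  have step : (i : ZMod p) * ((-1) ^ (i + 1) * (k : ZMod p)) =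
      (-1) ^ (i + 1) * ((k * i : ℕ) : ZMod p) := by push_cast; ring
  rw [step, hki, zmod_choose_sub_one hp (i - 1) (by omega)]
  have h2i : (i + 1) + (i - 1) = 2 * i := by omega
  rw [← pow_add, h2i, pow_mul]
  norm_num

lemma p_mul_Tsum {R : Type*} [CommRing R] {p : ℕ} (hp : p.Prime) (hp3 : 3 ≤ p) (x : R) :
    (p : R) * Tsum p x = 1 - x ^ p - (1 - x) ^ p := by
  have hodd : Odd p := hp.odd_of_ne_two (by omega)
  have hterm : ∀ i ∈ Finset.Icc 1 (p - 1),
      (p : R) * (((Tzc p i : ℤ) : R) * x ^ i) = -((-x) ^ i * (p.choose i : R)) := by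
    intro i hi
    simp only [Finset.mem_Icc] at hi
    have hd : p ∣ p.choose i := Nat.Prime.dvd_choose_self hp (by omega) (by omega)
    obtain ⟨k, hpk⟩ := hd
    have hdiv : p.choose i / p = k := by rw [hpk]; exact Nat.mul_div_cancel_left k hp.pos
    have hTz : (p : ℤ) * Tzc p i = (-1) ^ (i + 1) * (p.choose i : ℤ) := by
      rw [Tzc, hdiv, hpk]; push_cast; ring
    have hneg : (-x) ^ i = (-1) ^ i * x ^ i := by rw [neg_pow]
    calc (p : R) * (((Tzc p i : ℤ) : R) * x ^ i)
        = (((p : ℤ) * Tzc p i : ℤ) : R) * x ^ i := by push_cast; ring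
      _ = (((-1) ^ (i + 1) * (p.choose i : ℤ) : ℤ) : R) * x ^ i := by rw [hTz]
      _ = -((-x) ^ i * (p.choose i : R)) := by rw [hneg]; push_cast; ring
  have hbin : (1 - x) ^ p = ∑ k ∈ Finset.range (p + 1), (-x) ^ k * (p.choose k : R) := by
    have h := add_pow (-x) 1 p
    simp only [one_pow, mul_one] at h
    rw [show (1 : R) - x = -x + 1 by ring, h]
  have hmid : ∑ k ∈ Finset.range p, (-x) ^ k * (p.choose k : R)
      = 1 + ∑ i ∈ Finset.Icc 1 (p - 1), (-x) ^ i * (p.choose i : R) := by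
    have h' := Finset.sum_range_succ' (fun k => (-x) ^ k * (p.choose k : R)) (p - 1)
    rw [show p - 1 + 1 = p from by omega] at h'
    rw [h', show Finset.Icc 1 (p - 1) = Finset.Ico 1 p from by
      rw [← Finset.Ico_add_one_right_eq_Icc]; congr 1; omega, Finset.sum_Ico_eq_sum_range]
    simp only [pow_zero, Nat.choose_zero_right, Nat.cast_one, one_mul]
    rw [add_comm]
    congr 1
    exact Finset.sum_congr rfl fun i _ => by rw [add_comm i 1]
  have hsplit : (1 - x) ^ p
      = 1 + (∑ i ∈ Finset.Icc 1 (p - 1), (-x) ^ i * (p.choose i : R)) + (-x) ^ p := by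
    rw [hbin, Finset.sum_range_succ, hmid, Nat.choose_self]
    push_cast; ring
  rw [Tsum, Finset.mul_sum, Finset.sum_congr rfl hterm, hsplit, hodd.neg_pow,
    Finset.sum_neg_distrib]
  ring

lemma map_Tsum {R S : Type*} [CommRing R] [CommRing S] (f : R →+* S) (p : ℕ) (x : R) :
    f (Tsum p x) = Tsum p (f x) := by
  simp [Tsum, map_sum, map_mul, map_pow, map_intCast]

/-- all monomials of `f` have total degree at least `d`. -/
def MdegLB (d : ℕ) (f : MvPolynomial (Fin 2) ℤ) : Prop :=
  ∀ m ∈ f.support, d ≤ m 0 + m 1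

lemma mdegLB_mono {d e : ℕ} {f : MvPolynomial (Fin 2) ℤ} (h : e ≤ d) (hf : MdegLB d f) :
    MdegLB e f := fun m hm => le_trans h (hf m hm)

lemma mdegLB_neg {d : ℕ} {f : MvPolynomial (Fin 2) ℤ} (hf : MdegLB d f) : MdegLB d (-f) := by
  intro m hm
  rw [MvPolynomial.support_neg] at hm
  exact hf m hm

lemma mdegLB_add {d : ℕ} {f g : MvPolynomial (Fin 2) ℤ} (hf : MdegLB d f) (hg : MdegLB d g) :
    MdegLB d (f + g) := by
  intro m hm
  have := MvPolynomial.support_add hm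
  rcases Finset.mem_union.mp this with h | h
  · exact hf m h
  · exact hg m h

lemma mdegLB_sub {d : ℕ} {f g : MvPolynomial (Fin 2) ℤ} (hf : MdegLB d f) (hg : MdegLB d g) :
    MdegLB d (f - g) := by
  rw [sub_eq_add_neg]; exact mdegLB_add hf (mdegLB_neg hg)

lemma mdegLB_mul {d e : ℕ} {f g : MvPolynomial (Fin 2) ℤ} (hf : MdegLB d f) (hg : MdegLB e g) :
    MdegLB (d + e) (f * g) := by
  intro m hm
  rw [MvPolynomial.mem_support_iff, MvPolynomial.coeff_mul] at hm
  obtain ⟨q, hq, hne⟩ := Finset.exists_ne_zero_of_sum_ne_zero hm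
  have h1 : q.1 ∈ f.support := MvPolynomial.mem_support_iff.mpr (left_ne_zero_of_mul hne)
  have h2 : q.2 ∈ g.support := MvPolynomial.mem_support_iff.mpr (right_ne_zero_of_mul hne)
  have hqm : q.1 + q.2 = m := Finset.HasAntidiagonal.mem_antidiagonal.mp hq
  have : m 0 + m 1 = (q.1 0 + q.1 1) + (q.2 0 + q.2 1) := by
    rw [← hqm]; simp [Finsupp.add_apply]; ring
  rw [this]
  exact add_le_add (hf q.1 h1) (hg q.2 h2)

lemma mdegLB_pow {d : ℕ} {f : MvPolynomial (Fin 2) ℤ} (hf : MdegLB d f) (n : ℕ) :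
    MdegLB (n * d) (f ^ n) := by
  induction n with
  | zero => intro m hm; simp at hm ⊢
  | succ n ih =>
    have := mdegLB_mul ih hf
    rw [pow_succ]
    have he : n * d + d = (n + 1) * d := by ring
    rw [he] at this
    exact this

lemma mdegLB_X (i : Fin 2) : MdegLB 1 (MvPolynomial.X i) := by
  intro m hm
  rw [MvPolynomial.support_X] at hm
  rcases Finset.mem_singleton.mp hm with rfl
  fin_cases i <;> simp

lemma Tsum_mul_aux {R : Type*} [CommRing R] {p : ℕ} [CharP R p] (hp : p.Prime) (hp3 : 3 ≤ p)
    (a b : R) (h0 : ∀ j k : ℕ, p - 1 ≤ j + k → a ^ j * b ^ k = 0) :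
    Tsum p (a + b - a * b) = Tsum p a + Tsum p b := by
  classical
  haveI : Fact p.Prime := ⟨hp⟩
  set A := MvPolynomial (Fin 2) ℤ with hA
  let u : A := MvPolynomial.X 0
  let w : A := MvPolynomial.X 1
  -- the error term F and its divisibility by p
  set F : A := (u + w - u * w) ^ p + u ^ p * w ^ p - u ^ p - w ^ p with hF
  have hmapF : MvPolynomial.map (Int.castRingHom (ZMod p)) F = 0 := by
    have hchar : CharP (MvPolynomial (Fin 2) (ZMod p)) p := inferInstance
    simp only [hF, map_add, map_sub, map_pow, map_mul, MvPolynomial.map_X]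
    rw [sub_pow_char, add_pow_char, mul_pow]
    ring
  have hdvd : MvPolynomial.C (p : ℤ) ∣ F := by
    rw [MvPolynomial.C_dvd_iff_dvd_coeff]
    intro m
    have := congrArg (fun f => MvPolynomial.coeff m f) hmapF
    simp only [MvPolynomial.coeff_map, MvPolynomial.coeff_zero] at this
    exact (ZMod.intCast_zmod_eq_zero_iff_dvd _ p).mp this
  obtain ⟨Gg, hG⟩ := hdvd
  have hCp : (MvPolynomial.C (p : ℤ) : A) = (p : A) := by
    rw [show ((p : ℕ) : ℤ) = ((p : ℕ) : ℤ) from rfl] ; exact_mod_cast map_natCast (MvPolynomial.C : ℤ →+* A) p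
  have hGF : (p : A) * Gg = F := by rw [← hCp, ← hG]
  -- support bound for Gg
  have hFdeg : MdegLB p F := by
    have hu : MdegLB 1 u := mdegLB_X 0
    have hw : MdegLB 1 w := mdegLB_X 1
    have hc : MdegLB 1 (u + w - u * w) :=
      mdegLB_sub (mdegLB_add hu hw) (mdegLB_mono (by omega) (mdegLB_mul hu hw))
    have h1 : MdegLB p ((u + w - u * w) ^ p) := by
      have := mdegLB_pow hc p; rwa [mul_one] at this
    have h2 : MdegLB p (u ^ p) := by have := mdegLB_pow hu p; rwa [mul_one] at this
    have h3 : MdegLB p (w ^ p) := by have := mdegLB_pow hw p; rwa [mul_one] at this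
    have h4 : MdegLB p (u ^ p * w ^ p) := mdegLB_mono (by omega) (mdegLB_mul h2 h3)
    exact mdegLB_sub (mdegLB_sub (mdegLB_add h1 h4) h2) h3
  have hGdeg : MdegLB p Gg := by
    intro m hm
    apply hFdeg m
    rw [MvPolynomial.mem_support_iff] at hm ⊢
    rw [hG, MvPolynomial.coeff_C_mul]
    intro hcon
    rcases mul_eq_zero.mp hcon with h | h
    · exact (Int.natCast_ne_zero.mpr hp.pos.ne') h
    · exact hm h
  -- the key identity in A
  have e1 := p_mul_Tsum hp hp3 u
  have e2 := p_mul_Tsum hp hp3 w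
  have e3 := p_mul_Tsum hp hp3 (u + w - u * w)
  rw [show (1 : A) - (u + w - u * w) = (1 - u) * (1 - w) from by ring, mul_pow] at e3
  have hpA : (p : A) ≠ 0 := by
    rw [← hCp]
    intro h
    have h' : (MvPolynomial.C ((p : ℕ) : ℤ) : A) = MvPolynomial.C (0 : ℤ) := by
      rw [show (MvPolynomial.C (0 : ℤ) : A) = 0 from map_zero _]; exact h
    exact (Int.natCast_ne_zero.mpr hp.pos.ne') (MvPolynomial.C_injective (Fin 2) ℤ h')
  have key : (p : A) * (Tsum p u + Tsum p w - Tsum p (u + w - u * w))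
      = (p : A) * ((p : A) * (Tsum p u * Tsum p w) + Tsum p u * w ^ p
          + Tsum p w * u ^ p + Gg) := by
    linear_combination (1 - (p : A) * Tsum p w - w ^ p) * e1 + (1 - u) ^ p * e2 - e3 - hGF
  have hAkey : Tsum p u + Tsum p w - Tsum p (u + w - u * w)
      = (p : A) * (Tsum p u * Tsum p w) + Tsum p u * w ^ p + Tsum p w * u ^ p + Gg :=
    mul_left_cancel₀ hpA key
  -- evaluate at a, b
  let ψ : A →+* R := MvPolynomial.eval₂Hom (Int.castRingHom R) ![a, b]
  have hψu : ψ u = a := by rw [show (u:A) = MvPolynomial.X 0 from rfl, MvPolynomial.eval₂Hom_X']; simp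
  have hψw : ψ w = b := by rw [show (w:A) = MvPolynomial.X 1 from rfl, MvPolynomial.eval₂Hom_X']; simp
  have hψp : ψ ((p : ℕ) : A) = (p : R) := by push_cast; simp
  have hψG : ψ Gg = 0 := by
    rw [show (ψ Gg : R) = MvPolynomial.eval₂ (Int.castRingHom R) ![a, b] Gg from rfl,
      MvPolynomial.eval₂_eq]
    apply Finset.sum_eq_zero
    intro m hm
    have hprod : (∏ i ∈ m.support, (![a, b] : Fin 2 → R) i ^ m i)
        = ∏ i : Fin 2, (![a, b] : Fin 2 → R) i ^ m i := by
      apply Finset.prod_subset (Finset.subset_univ _)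
      intro i _ hi
      rw [Finsupp.notMem_support_iff.mp hi, pow_zero]
    rw [hprod, Fin.prod_univ_two]
    have : a ^ m 0 * b ^ m 1 = 0 := h0 (m 0) (m 1) (by have := hGdeg m hm; omega)
    simp only [Matrix.cons_val_zero, Matrix.cons_val_one, Matrix.head_cons]
    rw [this, mul_zero]
  have := congrArg ψ hAkey
  simp only [map_add, map_sub, map_mul, map_pow, map_natCast, map_Tsum, hψu, hψw, hψG] at this
  rw [CharP.cast_eq_zero R p] at this
  simp only [zero_mul, mul_zero, add_zero, zero_add] at this
  have hbp : b ^ p = 0 := by have := h0 0 p (by omega); simpa using this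
  have hap : a ^ p = 0 := by have := h0 p 0 (by omega); simpa using this
  rw [hbp, hap] at this
  simp only [mul_zero, add_zero, zero_add] at this
  linear_combination -this


lemma tcoc_eq_Tsum {R : Type*} [CommRing R] {p : ℕ} [CharP R p] (hp : p.Prime) (hp3 : 3 ≤ p)
    (x : R) (hx : x ^ (p - 1) = 0) :
    (∑ i ∈ Finset.Icc 1 (p - 2), Ring.inverse (i : R) * x ^ i) = Tsum p x := by
  have hinv : ∀ i ∈ Finset.Icc 1 (p - 2),
      Ring.inverse ((i : ℕ) : R) * x ^ i = ((Tzc p i : ℤ) : R) * x ^ i := by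
    intro i hi
    rw [Finset.mem_Icc] at hi
    have hmz := mul_Tzc hp hi.1 (show i ≤ p - 1 by omega)
    have hmul1 : ((i : ℕ) : R) * ((Tzc p i : ℤ) : R) = 1 := by
      have := congrArg (ZMod.castHom (dvd_refl p) R) hmz
      rw [map_one, map_intCast] at this
      push_cast at this
      exact_mod_cast this
    have hu : IsUnit ((i : ℕ) : R) := IsUnit.of_mul_eq_one _ hmul1
    have h2 : Ring.inverse ((i : ℕ) : R) * (((i : ℕ) : R) * ((Tzc p i : ℤ) : R))
        = Ring.inverse ((i : ℕ) : R) := by rw [hmul1, mul_one]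
    rw [← mul_assoc, Ring.inverse_mul_cancel _ hu, one_mul] at h2
    rw [← h2]
  rw [Finset.sum_congr rfl hinv, Tsum]
  have hins : Finset.Icc 1 (p - 1) = insert (p - 1) (Finset.Icc 1 (p - 2)) := by
    ext i; simp only [Finset.mem_Icc, Finset.mem_insert]; omega
  rw [hins, Finset.sum_insert (by simp only [Finset.mem_Icc]; omega)]
  rw [hx, mul_zero, zero_add]

/-- The element `t(σ) = ∑_{i=1}^{p-2} (1 - ε(σ))^i / i` of the ring `R` (playing the role of
`O_K̄/p`), where `ε(σ)` is the image of `σ(π₁)/π₁`. -/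
noncomputable def tcoc (p : ℕ) {G : Type*} {R : Type*} [CommRing R]
    (ε : G → R) (σ : G) : R :=
  ∑ i ∈ Finset.Icc 1 (p - 2), Ring.inverse (i : R) * (1 - ε σ) ^ i

/-- in the setting of a finite totally ramified extension `K` of `W(k)[1/p]`
with fixed `p`-th root `π₁` of a uniformizer, the ring `R = O_K̄/p` carries an action of
`G_K`, a truncated (additive) valuation `v` normalized by `v_p(p) = 1`, and the map
`ε : G_K → R`, `σ ↦ σ(π₁)/π₁`, is a multiplicative cocycle with values in the `p`-th roots
of unity whose kernel is `G₁` and with `v(1 - ε σ) = 1/(p-1)` for `σ ∉ G₁`.  Then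
`t(σ) = ∑_{i=1}^{p-2} (1 - ε σ)^i / i` is a cocycle: `t(σσ') = t(σ) + σ·t(σ')`; `t(σ) = 0`
for `σ ∈ G₁`; and for `σ ∉ G₁`, `t(σ)` has valuation `1/(p-1)`, so in particular
`t(σ)^(p-1) = 0`. -/
theorem t_is_cocycle (p : ℕ) (hp : p.Prime) (hp3 : 3 ≤ p)
    {G : Type*} [Group G] (G₁ : Subgroup G)
    {R : Type*} [CommRing R] [CharP R p] [MulSemiringAction G R]
    (v : R → WithTop ℚ)
    (hv0 : ∀ x : R, 0 ≤ v x)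
    (hvzero : v 0 = ⊤)
    (hvone : v 1 = 0)
    (hvmul : ∀ x y : R, v x + v y ≤ v (x * y))
    (hvadd : ∀ x y : R, min (v x) (v y) ≤ v (x + y))
    (hvadd' : ∀ x y : R, v x ≠ v y → v (x + y) = min (v x) (v y))
    (htrunc : ∀ x : R, (1 : WithTop ℚ) ≤ v x → x = 0)
    (hvequiv : ∀ (σ : G) (x : R), v (σ • x) = v x)
    (ε : G → R)
    (hcocycle : ∀ σ σ' : G, ε (σ * σ') = ε σ * σ • ε σ')
    (hroot : ∀ σ : G, ε σ ^ p = 1)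
    (hker : ∀ σ : G, σ ∈ G₁ ↔ ε σ = 1)
    (hval : ∀ σ : G, σ ∉ G₁ →
      v (1 - ε σ) = (((1 : ℚ) / ((p : ℚ) - 1) : ℚ) : WithTop ℚ)) :
    (∀ σ σ' : G, tcoc p ε (σ * σ') = tcoc p ε σ + σ • tcoc p ε σ') ∧
    (∀ σ ∈ G₁, tcoc p ε σ = 0) ∧
    (∀ σ : G, σ ∉ G₁ →
      v (tcoc p ε σ) = (((1 : ℚ) / ((p : ℚ) - 1) : ℚ) : WithTop ℚ) ∧
      tcoc p ε σ ^ (p - 1) = 0) := by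
  classical
  set q : ℚ := (1 : ℚ) / ((p : ℚ) - 1) with hqdef
  have hp1q : (0 : ℚ) < (p : ℚ) - 1 := by
    have : (3 : ℚ) ≤ (p : ℚ) := by exact_mod_cast hp3
    linarith
  have hq0 : 0 < q := by rw [hqdef]; positivity
  -- valuation of powers
  have hvpow : ∀ (x : R) (c : ℚ) (n : ℕ), ((c : WithTop ℚ)) ≤ v x →
      (((n : ℚ) * c : ℚ) : WithTop ℚ) ≤ v (x ^ n) := by
    intro x c n hx
    induction n with
    | zero => rw [pow_zero, hvone]; norm_num
    | succ n ih =>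
      have h1 : v (x ^ n) + v x ≤ v (x ^ n * x) := hvmul _ _
      have h2 : ((((n : ℚ) * c + c) : ℚ) : WithTop ℚ) ≤ v (x ^ n) + v x := by
        rw [WithTop.coe_add]; exact add_le_add ih hx
      rw [pow_succ]
      refine le_trans (le_trans ?_ h2) h1
      apply WithTop.coe_le_coe.mpr
      push_cast
      linarith
  -- every 1 - ε τ has valuation at least q
  have hv1e : ∀ τ : G, ((q : ℚ) : WithTop ℚ) ≤ v (1 - ε τ) := by
    intro τ
    by_cases h : τ ∈ G₁
    · rw [(hker τ).mp h, sub_self, hvzero]; exact le_top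
    · rw [hval τ h]
  -- products of high total degree vanish
  have hzero : ∀ x y : R, ((q : ℚ) : WithTop ℚ) ≤ v x → ((q : ℚ) : WithTop ℚ) ≤ v y →
      ∀ j k : ℕ, p - 1 ≤ j + k → x ^ j * y ^ k = 0 := by
    intro x y hx hy j k hjk
    apply htrunc
    have h1 := hvpow x q j hx
    have h2 := hvpow y q k hy
    have h3 : v (x ^ j) + v (y ^ k) ≤ v (x ^ j * y ^ k) := hvmul _ _
    have h4 : ((((j : ℚ) * q + (k : ℚ) * q) : ℚ) : WithTop ℚ) ≤ v (x ^ j * y ^ k) := by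
      rw [WithTop.coe_add]
      exact le_trans (add_le_add h1 h2) h3
    refine le_trans ?_ h4
    have h5 : (1 : ℚ) ≤ (j : ℚ) * q + (k : ℚ) * q := by
      have hjk' : ((p : ℚ) - 1) ≤ (j : ℚ) + (k : ℚ) := by
        have : ((p - 1 : ℕ) : ℚ) ≤ ((j + k : ℕ) : ℚ) := by exact_mod_cast hjk
        push_cast at this
        have hp1 : (1 : ℚ) ≤ (p : ℚ) := by exact_mod_cast hp.one_lt.le
        rw [Nat.cast_sub (by omega)] at this
        · push_cast at this; linarith
      have hqq : ((p : ℚ) - 1) * q = 1 := by rw [hqdef]; field_simp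
      nlinarith
    calc (1 : WithTop ℚ) = ((1 : ℚ) : WithTop ℚ) := by norm_num
      _ ≤ _ := WithTop.coe_le_coe.mpr h5
  -- (1 - ε τ)^(p-1) = 0
  have hx1 : ∀ x : R, ((q : ℚ) : WithTop ℚ) ≤ v x → x ^ (p - 1) = 0 := by
    intro x hx
    have := hzero x x hx hx (p - 1) 0 (by omega)
    simpa using this
  -- σ • Tsum
  have hsmulT : ∀ (σ : G) (x : R), σ • Tsum p x = Tsum p (σ • x) := by
    intro σ x
    exact map_Tsum (MulSemiringAction.toRingHom G R σ) p x
  have hvb : ∀ (σ τ : G), ((q : ℚ) : WithTop ℚ) ≤ v (1 - σ • ε τ) := by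
    intro σ τ
    rw [show (1 : R) - σ • ε τ = σ • (1 - ε τ) by rw [smul_sub, smul_one], hvequiv]
    exact hv1e τ
  refine ⟨?_, ?_, ?_⟩
  · -- cocycle identity
    intro σ σ'
    have ha := hv1e σ
    have hb := hvb σ σ'
    have h0 := hzero _ _ ha hb
    have e_prod : 1 - ε (σ * σ')
        = (1 - ε σ) + (1 - σ • ε σ') - (1 - ε σ) * (1 - σ • ε σ') := by
      rw [hcocycle]; ring
    have hsm : σ • tcoc p ε σ' = Tsum p (1 - σ • ε σ') := by
      have h1 : tcoc p ε σ' = Tsum p (1 - ε σ') :=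
        tcoc_eq_Tsum hp hp3 _ (hx1 _ (hv1e σ'))
      rw [h1, hsmulT, smul_sub, smul_one]
    calc tcoc p ε (σ * σ') = Tsum p (1 - ε (σ * σ')) := by
          have hq1 : ((q : ℚ) : WithTop ℚ) ≤ v (1 - ε (σ * σ')) := hv1e _
          exact tcoc_eq_Tsum hp hp3 _ (hx1 _ hq1)
      _ = Tsum p ((1 - ε σ) + (1 - σ • ε σ') - (1 - ε σ) * (1 - σ • ε σ')) := by rw [e_prod]
      _ = Tsum p (1 - ε σ) + Tsum p (1 - σ • ε σ') := Tsum_mul_aux hp hp3 _ _ h0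
      _ = tcoc p ε σ + σ • tcoc p ε σ' := by
          rw [← tcoc_eq_Tsum hp hp3 _ (hx1 _ (hv1e σ)), hsm]
          rfl
  · -- vanishing on G₁
    intro σ hσ
    have h1 := (hker σ).mp hσ
    apply Finset.sum_eq_zero
    intro i hi
    rw [Finset.mem_Icc] at hi
    rw [h1, sub_self, zero_pow (by omega), mul_zero]
  · -- exact valuation
    intro σ hσ
    set x : R := 1 - ε σ with hxdef
    have hvx : v x = ((q : ℚ) : WithTop ℚ) := hval σ hσ
    -- sum bound helper
    have hsumbound : ∀ (s : Finset ℕ) (f : ℕ → R) (c : WithTop ℚ),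
        (∀ i ∈ s, c ≤ v (f i)) → c ≤ v (∑ i ∈ s, f i) := by
      intro s
      induction s using Finset.induction_on with
      | empty => intro f c _; rw [Finset.sum_empty, hvzero]; exact le_top
      | insert _ _ hns ih =>
        intro f c hc
        rename_i a s'
        rw [Finset.sum_insert hns]
        refine le_trans (le_min (hc a (Finset.mem_insert_self a s')) ?_) (hvadd _ _)
        exact ih f c fun i hi => hc i (Finset.mem_insert_of_mem hi)
    have hins : Finset.Icc 1 (p - 2) = insert 1 (Finset.Icc 2 (p - 2)) := by
      ext i; simp only [Finset.mem_Icc, Finset.mem_insert]; omega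
    have hterm1 : Ring.inverse ((1 : ℕ) : R) * x ^ 1 = x := by
      rw [Nat.cast_one, Ring.inverse_one, one_mul, pow_one]
    have hsplit : tcoc p ε σ = x + ∑ i ∈ Finset.Icc 2 (p - 2), Ring.inverse (i : R) * x ^ i := by
      show (∑ i ∈ Finset.Icc 1 (p - 2), Ring.inverse (i : R) * x ^ i) = _
      rw [hins, Finset.sum_insert (by simp only [Finset.mem_Icc]; omega), hterm1]
    have hS : (((2 * q : ℚ)) : WithTop ℚ)
        ≤ v (∑ i ∈ Finset.Icc 2 (p - 2), Ring.inverse (i : R) * x ^ i) := by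
      apply hsumbound
      intro i hi
      rw [Finset.mem_Icc] at hi
      have h1 : v (Ring.inverse (i : R)) + v (x ^ i) ≤ v (Ring.inverse (i : R) * x ^ i) :=
        hvmul _ _
      have h2 := hvpow x q i (le_of_eq hvx.symm)
      have h3 : (((2 * q : ℚ)) : WithTop ℚ) ≤ (((i : ℚ) * q : ℚ) : WithTop ℚ) := by
        apply WithTop.coe_le_coe.mpr
        have : (2 : ℚ) ≤ (i : ℚ) := by exact_mod_cast hi.1
        nlinarith
      refine le_trans (le_trans h3 h2) (le_trans ?_ h1)
      calc v (x ^ i) = 0 + v (x ^ i) := by rw [zero_add]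
        _ ≤ v (Ring.inverse (i : R)) + v (x ^ i) := by
            exact add_le_add (hv0 _) le_rfl
    have hlt : (((q : ℚ)) : WithTop ℚ) < (((2 * q : ℚ)) : WithTop ℚ) := by
      apply WithTop.coe_lt_coe.mpr; linarith
    have hne : v x ≠ v (∑ i ∈ Finset.Icc 2 (p - 2), Ring.inverse (i : R) * x ^ i) := by
      rw [hvx]
      exact ne_of_lt (lt_of_lt_of_le hlt hS)
    have hvt : v (tcoc p ε σ) = ((q : ℚ) : WithTop ℚ) := by
      rw [hsplit, hvadd' _ _ hne, hvx]
      exact min_eq_left (le_of_lt (lt_of_lt_of_le (hvx ▸ hvx ▸ hlt) hS))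
    refine ⟨hvt, ?_⟩
    apply htrunc
    have h1 := hvpow (tcoc p ε σ) q (p - 1) (le_of_eq hvt.symm)
    refine le_trans ?_ h1
    have : (((p - 1 : ℕ) : ℚ) * q : ℚ) = 1 := by
      rw [Nat.cast_sub (by omega), hqdef]
      push_cast
      field_simp
    rw [this]
    norm_num
end
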